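/- arXiv:1110.2203 — 11 statements merged into one kernel-verified Lean document; each statement's English description precedes it below -/
import Mathlib

section
/- Let T be a tree (a finite connected acyclic simple graph) with vertex set U, and let S be a nonempty finite collection of subsets of U, each of which is tree convex under T. Then the intersection of all sets in S is nonempty if and only if E1 ∩ E2 is nonempty for every pair of sets E1, E2 ∈ S. -/
open SimpleGraph

/-- A set `A` of vertices of a tree `T` is *tree convex* under `T` if it is the vertex
set of a subtree of `T`, i.e. the subgraph of `T` induced on `A` is connected
(connectedness includes nonemptiness). -/
def TreeConvexSet {U : Type} (T : SimpleGraph U) (A : Set U) : Prop :=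
  (T.induce A).Connected

section Aux

variable {U : Type} {T : SimpleGraph U}

/-- A walk with support in `A` yields reachability in the induced graph. -/
lemma aux_walk_in_induce {A : Set U} :
    ∀ {u v : U} (W : T.Walk u v), (∀ x ∈ W.support, x ∈ A) →
    ∀ (hu : u ∈ A) (hv : v ∈ A), (T.induce A).Reachable ⟨u, hu⟩ ⟨v, hv⟩ := by
  intro u v W
  induction W with
  | nil => intro _ hu hv; rfl
  | @cons a b c h W ih =>
    intro hsup ha hc
    have hb : b ∈ A := hsup b (by simp [Walk.support_cons])
    have h1 : (T.induce A).Adj ⟨a, ha⟩ ⟨b, hb⟩ := by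
      simp [comap_adj, h]
    exact h1.reachable.trans (ih (fun x hx => hsup x (by simp [Walk.support_cons, hx])) hb hc)

/-- In a tree, a tree convex set contains the support of any path between two of its members. -/
lemma aux_convex_path (hT : T.IsTree) {A : Set U} (hA : TreeConvexSet T A)
    {u v : U} (hu : u ∈ A) (hv : v ∈ A) (W : T.Walk u v) (hW : W.IsPath) :
    ∀ x ∈ W.support, x ∈ A := by
  classical
  have hA' : (T.induce A).Connected := hA
  obtain ⟨W'⟩ := hA'.preconnected ⟨u, hu⟩ ⟨v, hv⟩
  let W'' : T.Walk u v := W'.map (Embedding.induce A).toHom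
  have hsup : ∀ x ∈ W''.support, x ∈ A := by
    intro x hx
    rw [show W''.support = W'.support.map (Embedding.induce A).toHom from Walk.support_map _ _, List.mem_map] at hx
    obtain ⟨y, _, rfl⟩ := hx
    exact y.2
  have hbp : W''.bypass.IsPath := Walk.bypass_isPath W''
  have : W = W''.bypass := (hT.existsUnique_path u v).unique hW hbp
  intro x hx
  exact hsup x (Walk.support_bypass_subset _ (this ▸ hx))

/-- Characterization of tree convexity via path supports. -/
lemma aux_convex_of_paths (hT : T.IsTree) {A : Set U} (hne : A.Nonempty)
    (h : ∀ u ∈ A, ∀ v ∈ A, ∀ W : T.Walk u v, W.IsPath → ∀ x ∈ W.support, x ∈ A) :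
    TreeConvexSet T A := by
  obtain ⟨a, ha⟩ := hne
  show (T.induce A).Connected
  have : Nonempty (↥A) := ⟨⟨a, ha⟩⟩
  refine Connected.mk ?_
  rintro ⟨u, hu⟩ ⟨v, hv⟩
  obtain ⟨W, hW⟩ := (hT.existsUnique_path u v).exists
  exact aux_walk_in_induce W (h u hu v hv W hW) hu hv

/-- Median construction: given paths `P : b → a` and `Q : c → a`, there is a vertex `m`
together with a path `R : b → m` inside `P` and a path `S : c → m` inside `Q` such that
`R.append S.reverse` is a path (from `b` to `c`). -/
lemma aux_median [DecidableEq U] :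
    ∀ {b a : U} (P : T.Walk b a) {c : U} (Q : T.Walk c a), P.IsPath → Q.IsPath →
    ∃ (m : U) (R : T.Walk b m) (S : T.Walk c m),
      (∀ x ∈ R.support, x ∈ P.support) ∧ (∀ x ∈ S.support, x ∈ Q.support) ∧
      (R.append S.reverse).IsPath := by
  intro b a P
  induction P with
  | nil =>
    intro c Q _ hQ
    refine ⟨_, Walk.nil, Q, by simp, by simp, ?_⟩
    simpa using hQ.reverse
  | @cons b b' a h P ih =>
    intro c Q hP hQ
    by_cases hb : b ∈ Q.support
    · refine ⟨b, Walk.nil, Q.takeUntil b hb, by simp, ?_, ?_⟩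
      · intro x hx; exact Walk.support_takeUntil_subset _ _ hx
      · simpa using (hQ.takeUntil hb).reverse
    · obtain ⟨m, R', S, hR's, hSs, hpath⟩ := ih Q hP.of_cons hQ
      have hbR' : b ∉ R'.support := fun hx => ((Walk.cons_isPath_iff h P).mp hP).2 (hR's b hx)
      have hbS : b ∉ S.support := fun hx => hb (hSs b hx)
      refine ⟨m, Walk.cons h R', S, ?_, hSs, ?_⟩
      · intro x hx
        rw [Walk.support_cons, List.mem_cons] at hx
        rcases hx with rfl | hx
        · simp
        · rw [Walk.support_cons, List.mem_cons]; right; exact hR's x hx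
      · rw [Walk.cons_append]
        refine hpath.cons ?_
        rw [Walk.mem_support_append_iff]
        rintro (hx | hx)
        · exact hbR' hx
        · exact hbS (by simpa [Walk.support_reverse] using hx)

/-- Helly for three tree convex sets. -/
lemma aux_helly3 (hT : T.IsTree) {A B C : Set U}
    (hA : TreeConvexSet T A) (hB : TreeConvexSet T B) (hC : TreeConvexSet T C)
    (hAB : (A ∩ B).Nonempty) (hAC : (A ∩ C).Nonempty) (hBC : (B ∩ C).Nonempty) :
    (A ∩ (B ∩ C)).Nonempty := by
  classical
  obtain ⟨a, haB, haC⟩ := hBC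
  obtain ⟨b, hbA, hbC⟩ := hAC
  obtain ⟨c, hcA, hcB⟩ := hAB
  obtain ⟨P, hP⟩ := (hT.existsUnique_path b a).exists
  obtain ⟨Q, hQ⟩ := (hT.existsUnique_path c a).exists
  obtain ⟨m, R, S, hRs, hSs, hpath⟩ := aux_median P Q hP hQ
  have hmP : m ∈ P.support := hRs m (Walk.end_mem_support R)
  have hmQ : m ∈ Q.support := hSs m (Walk.end_mem_support S)
  have hmC : m ∈ C := aux_convex_path hT hC hbC haC P hP m hmP
  have hmB : m ∈ B := aux_convex_path hT hB hcB haB Q hQ m hmQ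
  have hmA : m ∈ A :=
    aux_convex_path hT hA hbA hcA (R.append S.reverse) hpath m
      (by rw [Walk.mem_support_append_iff]; left; exact Walk.end_mem_support R)
  exact ⟨m, hmA, hmB, hmC⟩

/-- Intersection of two tree convex sets with a common point is tree convex. -/
lemma aux_convex_inter (hT : T.IsTree) {A B : Set U}
    (hA : TreeConvexSet T A) (hB : TreeConvexSet T B) (hAB : (A ∩ B).Nonempty) :
    TreeConvexSet T (A ∩ B) := by
  refine aux_convex_of_paths hT hAB ?_
  rintro u ⟨huA, huB⟩ v ⟨hvA, hvB⟩ W hW x hx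
  exact ⟨aux_convex_path hT hA huA hvA W hW x hx, aux_convex_path hT hB huB hvB W hW x hx⟩

/-- The hard direction, by strong induction on the cardinality of `S`. -/
lemma aux_main (hT : T.IsTree) :
    ∀ (n : ℕ) (S : Finset (Set U)), S.card ≤ n → S.Nonempty →
    (∀ A ∈ S, TreeConvexSet T A) → (∀ A ∈ S, ∀ B ∈ S, (A ∩ B).Nonempty) →
    (⋂ A ∈ S, A).Nonempty := by
  classical
  intro n
  induction n with
  | zero =>
    intro S hc hS _ _
    rw [Nat.le_zero, Finset.card_eq_zero] at hc
    exact absurd hc (Finset.nonempty_iff_ne_empty.mp hS)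
  | succ n ih =>
    intro S hc hS hconv hpair
    obtain ⟨A, hA⟩ := hS
    rcases (S.erase A).eq_empty_or_nonempty with he | hne
    · have hSA : S = {A} := by
        rcases (Finset.erase_eq_empty_iff S A).mp he with h1 | h1
        · exact absurd h1 (Finset.nonempty_iff_ne_empty.mp ⟨A, hA⟩)
        · exact h1
      subst hSA
      simpa using Set.inter_self A ▸ hpair A hA A hA
    · set S' : Finset (Set U) := (S.erase A).image (· ∩ A) with hS'def
      have hS'ne : S'.Nonempty := hne.image _
      have hmem : ∀ E ∈ S', ∃ B, B ∈ S ∧ B ≠ A ∧ E = B ∩ A := by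
        intro E hE
        simp only [hS'def, Finset.mem_image] at hE
        obtain ⟨B, hB, rfl⟩ := hE
        exact ⟨B, Finset.mem_of_mem_erase hB, (Finset.mem_erase.mp hB).1, rfl⟩
      have hconv' : ∀ E ∈ S', TreeConvexSet T E := by
        intro E hE
        obtain ⟨B, hB, _, rfl⟩ := hmem E hE
        exact aux_convex_inter hT (hconv B hB) (hconv A hA)
          (by rw [Set.inter_comm]; exact hpair A hA B hB)
      have hpair' : ∀ E ∈ S', ∀ F ∈ S', (E ∩ F).Nonempty := by
        intro E hE F hF
        obtain ⟨B, hB, _, rfl⟩ := hmem E hE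
        obtain ⟨C, hC, _, rfl⟩ := hmem F hF
        obtain ⟨x, hxA, hxB, hxC⟩ := aux_helly3 hT (hconv A hA) (hconv B hB) (hconv C hC)
          (hpair A hA B hB) (hpair A hA C hC) (hpair B hB C hC)
        exact ⟨x, ⟨hxB, hxA⟩, ⟨hxC, hxA⟩⟩
      have hcard : S'.card ≤ n := by
        have h1 : S'.card < n + 1 :=
          calc S'.card ≤ (S.erase A).card := Finset.card_image_le
            _ < S.card := Finset.card_erase_lt_of_mem hA
            _ ≤ n + 1 := hc
        omega
      obtain ⟨x, hx⟩ := ih S' hcard hS'ne hconv' hpair'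
      simp only [Set.mem_iInter] at hx
      refine ⟨x, Set.mem_iInter₂.mpr ?_⟩
      intro B hB
      rcases eq_or_ne B A with rfl | hBA
      · obtain ⟨E, hE⟩ := hS'ne
        obtain ⟨C, _, _, rfl⟩ := hmem E hE
        exact (hx _ hE).2
      · exact (hx (B ∩ A) (by
          simp only [hS'def, Finset.mem_image]
          exact ⟨B, Finset.mem_erase.mpr ⟨hBA, hB⟩, rfl⟩)).1

end Aux

/-- **Tree Convex Sets Intersection.**  If `S` is a nonempty finite collection of
subsets of the vertex set of a tree `T`, each tree convex under `T`, then the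
intersection of all sets of `S` is nonempty iff every two sets of `S` have a
nonempty intersection. -/
theorem tree_convex_sets_intersection {U : Type} [Fintype U]
    (T : SimpleGraph U) (hT : T.IsTree)
    (S : Finset (Set U)) (hS : S.Nonempty)
    (hconv : ∀ A ∈ S, TreeConvexSet T A) :
    (⋂ A ∈ S, A).Nonempty ↔ ∀ A ∈ S, ∀ B ∈ S, (A ∩ B).Nonempty := by
  constructor
  · rintro ⟨x, hx⟩ A hA B hB
    simp only [Set.mem_iInter] at hx
    exact ⟨x, hx A hA, hx B hB⟩
  · intro hpair
    exact aux_main hT S.card S le_rfl hS hconv hpair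
end

section
/- Let T be a tree with vertex set U, let r ∈ U be a fixed root, and let A and B be subsets of U that are tree convex under T. Let a ∈ A be a vertex of A at minimal graph distance from r (a root of A) and let b ∈ B be a vertex of B at minimal graph distance from r (a root of B). Then A ∩ B is nonempty if and only if a ∈ A ∩ B or b ∈ A ∩ B. -/
namespace TreeConvexAux

open SimpleGraph Walk

variable {U : Type} [DecidableEq U] {T : SimpleGraph U}

/-- In a tree, any two paths between the same endpoints are equal. -/
lemma tree_path_eq (hT : T.IsTree) {u v : U} {p q : T.Walk u v}
    (hp : p.IsPath) (hq : q.IsPath) : p = q :=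
  ((hT.existsUnique_path u v).unique hp hq)

/-- In a tree, any path has length equal to the distance between its endpoints. -/
lemma tree_path_length (hT : T.IsTree) {u v : U} {p : T.Walk u v}
    (hp : p.IsPath) : p.length = T.dist u v := by
  obtain ⟨w, hw⟩ := hT.isConnected.exists_walk_length_eq_dist u v
  have hb : p = w.bypass := tree_path_eq hT hp w.bypass_isPath
  have h1 : T.dist u v ≤ p.length := SimpleGraph.dist_le p
  have h2 : w.bypass.length ≤ w.length := Walk.length_bypass_le w
  rw [← hb] at h2
  omega

/-- In a tree, distances to adjacent vertices differ by exactly one. -/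
lemma adj_dist (hT : T.IsTree) {r u v : U} (h : T.Adj u v) :
    T.dist r v = T.dist r u + 1 ∨ T.dist r u = T.dist r v + 1 := by
  obtain ⟨pu, hpu⟩ : ∃ p : T.Walk r u, p.IsPath :=
    ⟨((hT.isConnected.preconnected r u).some).bypass, Walk.bypass_isPath _⟩
  obtain ⟨pv, hpv⟩ : ∃ p : T.Walk r v, p.IsPath :=
    ⟨((hT.isConnected.preconnected r v).some).bypass, Walk.bypass_isPath _⟩
  have hlu := tree_path_length hT hpu
  have hlv := tree_path_length hT hpv
  have htri1 : T.dist r v ≤ T.dist r u + 1 := by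
    have := SimpleGraph.dist_le (pu.concat h)
    rw [Walk.length_concat] at this
    omega
  have htri2 : T.dist r u ≤ T.dist r v + 1 := by
    have := SimpleGraph.dist_le (pv.concat h.symm)
    rw [Walk.length_concat] at this
    omega
  have hne : T.dist r u ≠ T.dist r v := by
    intro heq
    by_cases hmem : u ∈ pv.support
    · have h1 : (pv.takeUntil u hmem).length = T.dist r u :=
        tree_path_length hT (hpv.takeUntil hmem)
      have h2 := congrArg Walk.length (pv.take_spec hmem)
      rw [Walk.length_append] at h2
      have h3 : (pv.dropUntil u hmem).length = 0 := by omega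
      exact h.ne (Walk.eq_of_length_eq_zero h3)
    · have hconc : (pv.concat h.symm).IsPath := by
        rw [← Walk.isPath_reverse_iff, Walk.reverse_concat, Walk.cons_isPath_iff]
        refine ⟨(Walk.isPath_reverse_iff pv).mpr hpv, ?_⟩
        simpa [Walk.support_reverse] using hmem
      have h1 : (pv.concat h.symm).length = T.dist r u := tree_path_length hT hconc
      rw [Walk.length_concat] at h1
      omega
  omega

/-- Any two vertices of a tree convex set are joined by a path inside the set. -/
lemma convex_support (hT : T.IsTree) {A : Set U} (hA : TreeConvexSet T A)
    {x y : U} (hx : x ∈ A) (hy : y ∈ A) :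
    ∃ p : T.Walk x y, p.IsPath ∧ ∀ v ∈ p.support, v ∈ A := by
  obtain ⟨w⟩ := hA.preconnected ⟨x, hx⟩ ⟨y, hy⟩
  let w' := w.map (SimpleGraph.Embedding.induce A).toHom
  refine ⟨w'.bypass, w'.bypass_isPath, fun v hv => ?_⟩
  have hmem := w'.support_bypass_subset hv
  have : w'.support = w.support.map (Subtype.val) := Walk.support_map _ _
  rw [this] at hmem
  obtain ⟨⟨v', hv'⟩, _, rfl⟩ := List.mem_map.mp hmem
  exact hv'

/-- The step lemma: if `a` lies on the path from `r` to `u`, and `x` is adjacent to `u`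
with `dist r a ≤ dist r x`, then `a` lies on the path from `r` to `x`. -/
lemma step (hT : T.IsTree) {r a u x : U} (h : T.Adj u x)
    (hax : T.dist r a ≤ T.dist r x)
    {pu : T.Walk r u} (hpu : pu.IsPath) (ha : a ∈ pu.support)
    (px : T.Walk r x) (hpx : px.IsPath) : a ∈ px.support := by
  have hlu := tree_path_length hT hpu
  have hlx := tree_path_length hT hpx
  rcases adj_dist hT (r := r) h with hcase | hcase
  · -- dist r x = dist r u + 1 : px = pu.concat h
    have hx_not : x ∉ pu.support := by
      intro hmem
      have h1 : (pu.takeUntil x hmem).length = T.dist r x :=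
        tree_path_length hT (hpu.takeUntil hmem)
      have h2 := Walk.length_takeUntil_le pu hmem
      omega
    have hconc : (pu.concat h).IsPath := by
      rw [← Walk.isPath_reverse_iff, Walk.reverse_concat, Walk.cons_isPath_iff]
      refine ⟨(Walk.isPath_reverse_iff pu).mpr hpu, ?_⟩
      simpa [Walk.support_reverse] using hx_not
    have heq : px = pu.concat h := tree_path_eq hT hpx hconc
    rw [heq, Walk.support_concat]
    exact List.mem_append_left _ ha
  · -- dist r u = dist r x + 1 : pu = px.concat h.symm
    have hu_not : u ∉ px.support := by
      intro hmem
      have h1 : (px.takeUntil u hmem).length = T.dist r u :=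
        tree_path_length hT (hpx.takeUntil hmem)
      have h2 := Walk.length_takeUntil_le px hmem
      omega
    have hconc : (px.concat h.symm).IsPath := by
      rw [← Walk.isPath_reverse_iff, Walk.reverse_concat, Walk.cons_isPath_iff]
      refine ⟨(Walk.isPath_reverse_iff px).mpr hpx, ?_⟩
      simpa [Walk.support_reverse] using hu_not
    have heq : pu = px.concat h.symm := tree_path_eq hT hpu hconc
    rw [heq, Walk.support_concat] at ha
    rcases List.mem_append.mp ha with ha' | ha'
    · exact ha'
    · exfalso
      have : a = u := List.mem_singleton.mp ha'
      subst this
      omega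

/-- If `a` minimizes distance to `r` over a set containing the support of a walk from
`x` to `a`, then `a` lies on every path from `r` to `x`. -/
lemma root_on_path (hT : T.IsTree) {r : U} :
    ∀ {x a : U} (w : T.Walk x a), (∀ v ∈ w.support, T.dist r a ≤ T.dist r v) →
      ∀ (p : T.Walk r x), p.IsPath → a ∈ p.support := by
  intro x a w
  induction w with
  | nil => exact fun _ p _ => p.end_mem_support
  | @cons x y z hadj w ih =>
    intro hsup p hp
    obtain ⟨py, hpy⟩ : ∃ py : T.Walk r y, py.IsPath :=
      ⟨((hT.isConnected.preconnected r y).some).bypass, Walk.bypass_isPath _⟩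
    have hy : z ∈ py.support := ih (fun v hv => hsup v (by simp [hv])) py hpy
    exact step hT hadj.symm (hsup x (Walk.start_mem_support _)) hpy hy p hp

/-- The main auxiliary lemma: if the root of `A` is at least as close to `r` as the
root of `B`, and the sets intersect, then the root of `B` belongs to `A`. -/
lemma root_in_other (hT : T.IsTree) {r : U} {A B : Set U}
    (hA : TreeConvexSet T A) (hB : TreeConvexSet T B)
    {a : U} (haA : a ∈ A) (haMin : ∀ a' ∈ A, T.dist r a ≤ T.dist r a')
    {b : U} (hbB : b ∈ B) (hbMin : ∀ b' ∈ B, T.dist r b ≤ T.dist r b')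
    (hab : T.dist r a ≤ T.dist r b) {c : U} (hcA : c ∈ A) (hcB : c ∈ B) : b ∈ A := by
  obtain ⟨p, hp⟩ : ∃ p : T.Walk r c, p.IsPath :=
    ⟨((hT.isConnected.preconnected r c).some).bypass, Walk.bypass_isPath _⟩
  obtain ⟨qa, hqa, hqaA⟩ := convex_support hT hA haA hcA
  obtain ⟨qb, hqb, hqbB⟩ := convex_support hT hB hbB hcB
  have haP : a ∈ p.support := root_on_path hT qa.reverse
    (fun v hv => haMin v (hqaA v (by simpa [Walk.support_reverse] using hv))) p hp
  have hbP : b ∈ p.support := root_on_path hT qb.reverse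
    (fun v hv => hbMin v (hqbB v (by simpa [Walk.support_reverse] using hv))) p hp
  -- the suffix of p starting at a is the path from a to c, which lies in A
  have hdropA : ∀ v ∈ (p.dropUntil a haP).support, v ∈ A := by
    have heq : p.dropUntil a haP = qa.reverse.reverse := by
      rw [Walk.reverse_reverse]
      exact tree_path_eq hT (hp.dropUntil haP) hqa
    rw [Walk.reverse_reverse] at heq
    rw [heq]
    exact hqaA
  have hsplit := p.take_spec haP
  have hb' : b ∈ (p.takeUntil a haP).support ∨ b ∈ (p.dropUntil a haP).support := by
    rw [← Walk.mem_support_append_iff, hsplit]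
    exact hbP
  rcases hb' with hb1 | hb2
  · -- b lies on the prefix ending at a; then dist r b ≤ dist r a, forcing b = a
    have h1 : ((p.takeUntil a haP).takeUntil b hb1).length = T.dist r b :=
      tree_path_length hT ((hp.takeUntil haP).takeUntil hb1)
    have h2 : (p.takeUntil a haP).length = T.dist r a :=
      tree_path_length hT (hp.takeUntil haP)
    have h3 := Walk.length_takeUntil_le (p.takeUntil a haP) hb1
    have h4 := congrArg Walk.length ((p.takeUntil a haP).take_spec hb1)
    rw [Walk.length_append] at h4
    have h5 : ((p.takeUntil a haP).dropUntil b hb1).length = 0 := by omega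
    have hba : b = a := Walk.eq_of_length_eq_zero h5
    exact hba ▸ haA
  · exact hdropA b hb2

end TreeConvexAux

/-- Given a tree `T` rooted at `r` and tree convex sets `A`, `B` with respective
roots `a` and `b` (elements of minimal graph distance from `r`), the intersection
`A ∩ B` is nonempty iff `a ∈ A ∩ B` or `b ∈ A ∩ B`. -/
theorem tree_convex_inter_nonempty_iff_root_mem {U : Type} [Fintype U]
    (T : SimpleGraph U) (hT : T.IsTree) (r : U) (A B : Set U)
    (hA : TreeConvexSet T A) (hB : TreeConvexSet T B)
    (a : U) (haA : a ∈ A) (haMin : ∀ a' ∈ A, T.dist r a ≤ T.dist r a')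
    (b : U) (hbB : b ∈ B) (hbMin : ∀ b' ∈ B, T.dist r b ≤ T.dist r b') :
    (A ∩ B).Nonempty ↔ a ∈ A ∩ B ∨ b ∈ A ∩ B := by
  classical
  constructor
  · rintro ⟨c, hcA, hcB⟩
    rcases le_total (T.dist r a) (T.dist r b) with hle | hle
    · exact Or.inr ⟨TreeConvexAux.root_in_other hT hA hB haA haMin hbB hbMin hle hcA hcB, hbB⟩
    · exact Or.inl ⟨haA, TreeConvexAux.root_in_other hT hB hA hbB hbMin haA haMin hle hcB hcA⟩
  · rintro (h | h)
    exacts [⟨a, h⟩, ⟨b, h⟩]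
end

section
/- Let T be a tree with vertex set U, let r ∈ U be a fixed root, and let A and B be subsets of U that are tree convex under T. Let a ∈ A be a vertex of A at minimal graph distance from r (a root of A) and let b ∈ B be a vertex of B at minimal graph distance from r (a root of B), and suppose the distance from r to a is at least the distance from r to b. If A ∩ B is nonempty, then a is a root of A ∩ B, i.e., a ∈ A ∩ B and the distance from r to a is minimal among the distances from r to the vertices of A ∩ B. -/
open SimpleGraph

section Aux

variable {U : Type} {T : SimpleGraph U}

/-- In a tree, any path realizes the distance. -/
lemma tree_path_length_eq_dist (hT : T.IsTree) {u v : U}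
    (p : T.Walk u v) (hp : p.IsPath) : p.length = T.dist u v := by
  obtain ⟨q, hq, hlen⟩ := hT.isConnected.exists_path_of_dist u v
  obtain ⟨w, -, huniq⟩ := hT.existsUnique_path u v
  have : p = q := (huniq p hp).trans (huniq q hq).symm
  rw [this, hlen]

/-- Splitting a path at a support vertex splits the distance. -/
lemma tree_dist_add_dist_of_mem_support (hT : T.IsTree) {u v x : U}
    (p : T.Walk u v) (hp : p.IsPath) (hx : x ∈ p.support) :
    T.dist u x + T.dist x v = T.dist u v := by
  classical
  have h1 := tree_path_length_eq_dist hT _ (hp.takeUntil hx)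
  have h2 := tree_path_length_eq_dist hT _ (hp.dropUntil hx)
  have h3 := tree_path_length_eq_dist hT p hp
  have h4 := congrArg SimpleGraph.Walk.length (p.take_spec hx)
  rw [SimpleGraph.Walk.length_append] at h4
  omega

/-- In a tree, adjacent vertices have distances from `r` differing by exactly one. -/
lemma tree_adj_dist (hT : T.IsTree) (r : U) {x y : U} (h : T.Adj x y) :
    T.dist r x + 1 = T.dist r y ∨ T.dist r y + 1 = T.dist r x := by
  obtain ⟨p, hp, hpl⟩ := hT.isConnected.exists_path_of_dist r y
  obtain ⟨p', hp', hpl'⟩ := hT.isConnected.exists_path_of_dist r x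
  have hxy : T.dist x y = 1 := dist_eq_one_iff_adj.mpr h
  have hyx : T.dist y x = 1 := dist_eq_one_iff_adj.mpr h.symm
  by_cases hx : x ∈ p.support
  · left
    have := tree_dist_add_dist_of_mem_support hT p hp hx
    omega
  · by_cases hy : y ∈ p'.support
    · right
      have := tree_dist_add_dist_of_mem_support hT p' hp' hy
      omega
    · exfalso
      have hq : (SimpleGraph.Walk.cons h.symm p'.reverse).IsPath := by
        rw [SimpleGraph.Walk.cons_isPath_iff]
        exact ⟨hp'.reverse, by rwa [SimpleGraph.Walk.support_reverse, List.mem_reverse]⟩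
      have hq' := hq.reverse
      obtain ⟨w, -, huniq⟩ := hT.existsUnique_path r y
      have e1 := huniq _ hq'
      have e2 := huniq p hp
      apply hx
      rw [e2, ← e1, SimpleGraph.Walk.support_reverse, List.mem_reverse,
        SimpleGraph.Walk.support_cons]
      exact List.mem_cons_of_mem _
        (by rw [SimpleGraph.Walk.support_reverse, List.mem_reverse]
            exact p'.end_mem_support)

/-- In a tree, the neighbor on the `r`-side is unique. -/
lemma tree_parent_unique (hT : T.IsTree) (r : U) {x y z : U}
    (hy : T.Adj x y) (hz : T.Adj x z)
    (h1 : T.dist r y + 1 = T.dist r x) (h2 : T.dist r z + 1 = T.dist r x) : y = z := by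
  obtain ⟨p, hp, hpl⟩ := hT.isConnected.exists_path_of_dist r y
  obtain ⟨q, hq, hql⟩ := hT.isConnected.exists_path_of_dist r z
  have hl1 : (p.concat hy.symm).length = T.dist r x := by
    rw [SimpleGraph.Walk.length_concat]; omega
  have hl2 : (q.concat hz.symm).length = T.dist r x := by
    rw [SimpleGraph.Walk.length_concat]; omega
  have hw1 : (p.concat hy.symm).IsPath := SimpleGraph.Walk.isPath_of_length_eq_dist _ hl1
  have hw2 : (q.concat hz.symm).IsPath := SimpleGraph.Walk.isPath_of_length_eq_dist _ hl2
  obtain ⟨w, -, huniq⟩ := hT.existsUnique_path r x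
  have heq : p.concat hy.symm = q.concat hz.symm := (huniq _ hw1).trans (huniq _ hw2).symm
  have e1 : (p.concat hy.symm).getVert p.length = y := by
    rw [SimpleGraph.Walk.concat_eq_append, SimpleGraph.Walk.getVert_append]
    simp
  have e2 : (q.concat hz.symm).getVert q.length = z := by
    rw [SimpleGraph.Walk.concat_eq_append, SimpleGraph.Walk.getVert_append]
    simp
  have hpq : p.length = q.length := by omega
  rw [← e1, ← e2, heq, hpq]

/-- Along a path in a tree whose first step moves away from `r`, the distance from `r`
increases by one at each step. -/
lemma tree_walk_getVert_dist (hT : T.IsTree) (r : U) {s u : U} (q : T.Walk s u) :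
    q.IsPath → (q.length = 0 ∨ T.dist r (q.getVert 1) = T.dist r s + 1) →
    ∀ i ≤ q.length, T.dist r (q.getVert i) = T.dist r s + i := by
  induction q with
  | nil =>
    intro _ _ i hi
    simp only [SimpleGraph.Walk.length_nil, Nat.le_zero] at hi
    subst hi; simp
  | @cons s v u h q' ih =>
    intro hq hfirst i hi
    have hv : T.dist r v = T.dist r s + 1 := by
      rcases hfirst with h0 | h1
      · simp [SimpleGraph.Walk.length_cons] at h0
      · simpa [SimpleGraph.Walk.getVert_cons_succ] using h1
    have hq'' := (SimpleGraph.Walk.cons_isPath_iff h q').mp hq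
    have hfirst' : q'.length = 0 ∨ T.dist r (q'.getVert 1) = T.dist r v + 1 := by
      by_cases h0 : q'.length = 0
      · exact Or.inl h0
      · right
        have hpos : 0 < q'.length := Nat.pos_of_ne_zero h0
        have hadj : T.Adj (q'.getVert 0) (q'.getVert 1) := q'.adj_getVert_succ hpos
        rw [SimpleGraph.Walk.getVert_zero] at hadj
        rcases tree_adj_dist hT r hadj with hg | hb
        · exact hg.symm
        · exfalso
          have hsz : s = q'.getVert 1 :=
            tree_parent_unique hT r h.symm hadj (by omega) hb
          have hmem : q'.getVert 1 ∈ q'.support :=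
            SimpleGraph.Walk.mem_support_iff_exists_getVert.mpr ⟨1, rfl, hpos⟩
          rw [← hsz] at hmem
          exact hq''.2 hmem
    have IH := ih hq''.1 hfirst'
    match i with
    | 0 => simp
    | (j + 1) =>
      rw [SimpleGraph.Walk.getVert_cons_succ]
      have hj : j ≤ q'.length := by
        simp only [SimpleGraph.Walk.length_cons] at hi; omega
      have := IH j hj
      omega

/-- In a tree convex set, any two vertices are joined by a path inside the set. -/
lemma convex_exists_path {S : Set U} (hS : (T.induce S).Connected) {s u : U}
    (hs : s ∈ S) (hu : u ∈ S) :
    ∃ p : T.Walk s u, p.IsPath ∧ ∀ x ∈ p.support, x ∈ S := by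
  classical
  obtain ⟨w⟩ := hS ⟨s, hs⟩ ⟨u, hu⟩
  let f : T.induce S →g T := (SimpleGraph.Embedding.induce S).toHom
  have hw : ∀ x ∈ (w.map f).support, x ∈ S := by
    intro x hx
    rw [SimpleGraph.Walk.support_map, List.mem_map] at hx
    obtain ⟨⟨y, hy⟩, -, rfl⟩ := hx
    exact hy
  exact ⟨(w.map f).bypass, SimpleGraph.Walk.bypass_isPath _,
    fun x hx => hw x (SimpleGraph.Walk.support_bypass_subset _ hx)⟩

/-- The key lemma: from the root of a tree convex set, the path to any member moves
steadily away from `r`. -/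
lemma root_dist (hT : T.IsTree) (r : U) {S : Set U} (hS : (T.induce S).Connected)
    {s : U} (hs : s ∈ S) (hmin : ∀ x ∈ S, T.dist r s ≤ T.dist r x) {u : U} (hu : u ∈ S) :
    ∃ p : T.Walk s u, p.IsPath ∧ (∀ x ∈ p.support, x ∈ S) ∧ p.length = T.dist s u ∧
      ∀ i ≤ p.length, T.dist r (p.getVert i) = T.dist r s + i := by
  obtain ⟨p, hp, hsub⟩ := convex_exists_path hS hs hu
  have hlen := tree_path_length_eq_dist hT p hp
  refine ⟨p, hp, hsub, hlen, tree_walk_getVert_dist hT r p hp ?_⟩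
  by_cases h0 : p.length = 0
  · exact Or.inl h0
  · right
    have hpos : 0 < p.length := Nat.pos_of_ne_zero h0
    have hadj : T.Adj (p.getVert 0) (p.getVert 1) := p.adj_getVert_succ hpos
    rw [SimpleGraph.Walk.getVert_zero] at hadj
    rcases tree_adj_dist hT r hadj with hg | hb
    · exact hg.symm
    · exfalso
      have hmem : p.getVert 1 ∈ S :=
        hsub _ (SimpleGraph.Walk.mem_support_iff_exists_getVert.mpr ⟨1, rfl, hpos⟩)
      have := hmin _ hmem
      omega

/-- In a tree, a point on a geodesic from `r` to `c` is determined by its distance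
from `r`. -/
lemma tree_eq_of_dist (hT : T.IsTree) {r c x a : U}
    (hx : T.dist r c = T.dist r x + T.dist x c)
    (ha : T.dist r c = T.dist r a + T.dist a c)
    (hxa : T.dist r x = T.dist r a) : x = a := by
  obtain ⟨p1, hp1, l1⟩ := hT.isConnected.exists_path_of_dist r x
  obtain ⟨p2, hp2, l2⟩ := hT.isConnected.exists_path_of_dist x c
  obtain ⟨q1, hq1, m1⟩ := hT.isConnected.exists_path_of_dist r a
  obtain ⟨q2, hq2, m2⟩ := hT.isConnected.exists_path_of_dist a c
  have hw1 : (p1.append p2).length = T.dist r c := by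
    rw [SimpleGraph.Walk.length_append]; omega
  have hw2 : (q1.append q2).length = T.dist r c := by
    rw [SimpleGraph.Walk.length_append]; omega
  have hP1 : (p1.append p2).IsPath := SimpleGraph.Walk.isPath_of_length_eq_dist _ hw1
  have hP2 : (q1.append q2).IsPath := SimpleGraph.Walk.isPath_of_length_eq_dist _ hw2
  obtain ⟨w, -, huniq⟩ := hT.existsUnique_path r c
  have heq : p1.append p2 = q1.append q2 := (huniq _ hP1).trans (huniq _ hP2).symm
  have e1 : (p1.append p2).getVert (T.dist r x) = x := by
    rw [SimpleGraph.Walk.getVert_append, l1]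
    simp
  have e2 : (q1.append q2).getVert (T.dist r a) = a := by
    rw [SimpleGraph.Walk.getVert_append, m1]
    simp
  rw [← e1, ← e2, heq, hxa]

end Aux

/-- Given a tree `T` rooted at `r` and tree convex sets `A`, `B` with respective
roots `a` and `b` (elements of minimal graph distance from `r`), if `a` is at least
as far from `r` as `b` and `A ∩ B` is nonempty, then `a` is a root of `A ∩ B`:
`a ∈ A ∩ B` and `a` has minimal distance from `r` among the elements of `A ∩ B`. -/
theorem root_of_inter {U : Type} [Fintype U]
    (T : SimpleGraph U) (hT : T.IsTree) (r : U) (A B : Set U)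
    (hA : TreeConvexSet T A) (hB : TreeConvexSet T B)
    (a : U) (haA : a ∈ A) (haMin : ∀ a' ∈ A, T.dist r a ≤ T.dist r a')
    (b : U) (hbB : b ∈ B) (hbMin : ∀ b' ∈ B, T.dist r b ≤ T.dist r b')
    (hba : T.dist r b ≤ T.dist r a)
    (hne : (A ∩ B).Nonempty) :
    a ∈ A ∩ B ∧ ∀ u ∈ A ∩ B, T.dist r a ≤ T.dist r u := by
  have hA' : (T.induce A).Connected := hA
  have hB' : (T.induce B).Connected := hB
  obtain ⟨c, hcA, hcB⟩ := hne
  -- distance facts from the roots of A and B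
  obtain ⟨pA, hpA, hsubA, lA, gA⟩ := root_dist hT r hA' haA haMin hcA
  obtain ⟨pB, hpB, hsubB, lB, gB⟩ := root_dist hT r hB' hbB hbMin hcB
  have hrc_a : T.dist r c = T.dist r a + T.dist a c := by
    have := gA pA.length le_rfl
    rw [SimpleGraph.Walk.getVert_length] at this
    omega
  have hrc_b : T.dist r c = T.dist r b + T.dist b c := by
    have := gB pB.length le_rfl
    rw [SimpleGraph.Walk.getVert_length] at this
    omega
  have hac : T.dist r a ≤ T.dist r c := haMin c hcA
  set i := T.dist r a - T.dist r b with hi_def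
  have hi : i ≤ pB.length := by omega
  set x := pB.getVert i with hx_def
  have hxmem : x ∈ pB.support :=
    SimpleGraph.Walk.mem_support_iff_exists_getVert.mpr ⟨i, rfl, hi⟩
  have hxB : x ∈ B := hsubB x hxmem
  have hrx : T.dist r x = T.dist r a := by
    have h := gB i hi
    rw [← hx_def] at h
    omega
  have hsplit : T.dist b x + T.dist x c = T.dist b c :=
    tree_dist_add_dist_of_mem_support hT pB hpB hxmem
  have tri1 : T.dist r x ≤ T.dist r b + T.dist b x := hT.isConnected.dist_triangle
  have tri2 : T.dist r c ≤ T.dist r x + T.dist x c := hT.isConnected.dist_triangle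
  have hx_eq : T.dist r c = T.dist r x + T.dist x c := by omega
  have hxa : x = a := tree_eq_of_dist hT hx_eq hrc_a hrx
  have haB : a ∈ B := hxa ▸ hxB
  exact ⟨⟨haA, haB⟩, fun u hu => haMin u hu.1⟩
end

section
/- Let E_1, E_2, …, E_l be finite sets and let m be a natural number with m < l, and suppose |E_1| ≤ m. Then the intersection E_1 ∩ E_2 ∩ … ∩ E_l is nonempty if and only if for every index set I ⊆ {2, …, l} with |I| = m, the intersection of E_1 with all the sets E_i for i ∈ I is nonempty. -/
/-- Given finite sets `E 1, …, E l` and a number `m < l` with `|E 1| ≤ m`, the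
intersection of all `l` sets is nonempty iff the intersection of `E 1` with any
other `m` of the sets (indexed by an `m`-element subset of `{2,…,l}`) is nonempty. -/
theorem small_set_intersection_first {α : Type} (l m : ℕ) (hm : m < l)
    (E : ℕ → Finset α) (h1 : (E 1).card ≤ m) :
    (⋂ i ∈ Finset.Icc 1 l, (E i : Set α)).Nonempty ↔
      ∀ I ⊆ Finset.Icc 2 l, I.card = m →
        ((E 1 : Set α) ∩ ⋂ i ∈ I, (E i : Set α)).Nonempty := by
  constructor
  · rintro ⟨x, hx⟩ I hI hIc
    refine ⟨x, ?_, ?_⟩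
    · exact Set.mem_iInter₂.1 hx 1 (Finset.mem_Icc.2 ⟨le_refl 1, by omega⟩)
    · refine Set.mem_iInter₂.2 fun i hi => Set.mem_iInter₂.1 hx i ?_
      have h2 := Finset.mem_Icc.1 (hI hi)
      exact Finset.mem_Icc.2 ⟨by omega, h2.2⟩
  · intro h
    by_contra hempty
    rw [Set.not_nonempty_iff_eq_empty] at hempty
    have key : ∀ x ∈ E 1, ∃ i ∈ Finset.Icc 2 l, x ∉ E i := by
      intro x hx
      by_contra hc
      push_neg at hc
      have hmem : x ∈ ⋂ i ∈ Finset.Icc 1 l, (E i : Set α) := by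
        refine Set.mem_iInter₂.2 fun i hi => ?_
        rcases Finset.mem_Icc.1 hi with ⟨h1i, hil⟩
        rcases Nat.eq_or_lt_of_le h1i with heq | hlt
        · simpa [← heq] using hx
        · exact hc i (Finset.mem_Icc.2 ⟨hlt, hil⟩)
      rw [hempty] at hmem
      exact hmem
    choose f hf1 hf2 using key
    set I0 : Finset ℕ := (E 1).attach.image (fun x => f x.1 x.2) with hI0
    have hI0sub : I0 ⊆ Finset.Icc 2 l := by
      intro i hi
      simp only [hI0, Finset.mem_image, Finset.mem_attach] at hi
      obtain ⟨⟨x, hx⟩, -, rfl⟩ := hi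
      exact hf1 x hx
    have hI0card : I0.card ≤ m :=
      le_trans (le_trans (Finset.card_image_le) (by simp)) h1
    have hIcc : m ≤ (Finset.Icc 2 l).card := by
      rw [Nat.card_Icc]; omega
    obtain ⟨t, ht0, htsub, htcard⟩ :=
      Finset.exists_subsuperset_card_eq hI0sub hI0card hIcc
    obtain ⟨x, hx1, hx2⟩ := h t htsub htcard
    have : x ∈ E (f x hx1) :=
      Set.mem_iInter₂.1 hx2 _ (ht0 (Finset.mem_image.2 ⟨⟨x, hx1⟩, Finset.mem_attach _ _, rfl⟩))
    exact hf2 x hx1 this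
end

section
/- Let E_1, E_2, …, E_l be finite sets and let m be a natural number with m < l, and suppose some E_j satisfies |E_j| ≤ m. Then the intersection E_1 ∩ E_2 ∩ … ∩ E_l is nonempty if and only if for every index set I ⊆ {1, …, l} with |I| = m + 1, the intersection of the sets E_i for i ∈ I is nonempty. -/
/-- **Small Set Intersection.**  Given finite sets `E 1, …, E l` and a number
`m < l` such that some `E j` has at most `m` elements, the intersection of all
`l` sets is nonempty iff the intersection of any `m + 1` of the sets is nonempty. -/
theorem small_set_intersection {α : Type} (l m : ℕ) (hm : m < l)
    (E : ℕ → Finset α) (j : ℕ) (hj : j ∈ Finset.Icc 1 l) (hjm : (E j).card ≤ m) :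
    (⋂ i ∈ Finset.Icc 1 l, (E i : Set α)).Nonempty ↔
      ∀ I ⊆ Finset.Icc 1 l, I.card = m + 1 →
        (⋂ i ∈ I, (E i : Set α)).Nonempty := by
  classical
  constructor
  · rintro ⟨x, hx⟩ I hI _
    exact ⟨x, by
      simp only [Set.mem_iInter] at hx ⊢
      exact fun i hi => hx i (hI hi)⟩
  · intro h
    -- T : bad elements of E j
    set T := (E j).filter (fun x => x ∉ ⋂ i ∈ Finset.Icc 1 l, (E i : Set α)) with hT
    have hbad : ∀ x ∈ T, ∃ i ∈ Finset.Icc 1 l, x ∉ E i := by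
      intro x hx
      rw [hT, Finset.mem_filter] at hx
      have := hx.2
      simp only [Set.mem_iInter, Finset.mem_coe, not_forall] at this
      obtain ⟨i, hi, hni⟩ := this
      exact ⟨i, hi, hni⟩
    choose! f hf1 hf2 using hbad
    set I0 := insert j (T.image f) with hI0
    have hI0sub : I0 ⊆ Finset.Icc 1 l := by
      intro i hi
      rw [hI0, Finset.mem_insert] at hi
      rcases hi with rfl | hi
      · exact hj
      · obtain ⟨x, hx, rfl⟩ := Finset.mem_image.mp hi
        exact hf1 x hx
    have hI0card : I0.card ≤ m + 1 := by
      calc I0.card ≤ (T.image f).card + 1 := Finset.card_insert_le _ _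
        _ ≤ T.card + 1 := by
            exact Nat.add_le_add_right (Finset.card_image_le) 1
        _ ≤ (E j).card + 1 := by
            exact Nat.add_le_add_right (Finset.card_filter_le _ _) 1
        _ ≤ m + 1 := Nat.add_le_add_right hjm 1
    obtain ⟨I, hI0I, hIsub, hIcard⟩ :=
      Finset.exists_subsuperset_card_eq hI0sub hI0card
        (by simpa [Nat.card_Icc] using hm)
    obtain ⟨y, hy⟩ := h I hIsub hIcard
    refine ⟨y, ?_⟩
    simp only [Set.mem_iInter, Finset.mem_coe] at hy
    have hyj : y ∈ E j := hy j (hI0I (Finset.mem_insert_self _ _))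
    by_contra hcon
    have hyT : y ∈ T := by
      rw [hT, Finset.mem_filter]
      exact ⟨hyj, hcon⟩
    have : f y ∈ I := hI0I (Finset.mem_insert_of_mem (Finset.mem_image_of_mem f hyT))
    exact hf2 y hyT (hy _ this)
end

section
/- Let R be a constraint network in which every constraint has arity at most r. If R is strongly ((m+1)(r−1)+1)-consistent and weakly m-tight at level (m+1)(r−1)+1, then R is globally consistent. -/
/-- A constraint: a nonempty scope of variables and a set of allowed tuples
(total assignments whose restriction to the scope determines membership). -/
structure Constraint (V : Type) (α : Type) where
  scope : Finset V
  scope_nonempty : scope.Nonempty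
  allowed : Set (V → α)
  allowed_ext : ∀ f g : V → α, (∀ v ∈ scope, f v = g v) → f ∈ allowed → g ∈ allowed

/-- A constraint network: a finite nonempty domain for each variable and a finite
set of constraints, no two of which have the same scope. -/
structure Network (V : Type) (α : Type) [Fintype V] [DecidableEq V] where
  dom : V → Finset α
  dom_nonempty : ∀ v, (dom v).Nonempty
  cons : Set (Constraint V α)
  cons_finite : cons.Finite
  scope_inj : ∀ c ∈ cons, ∀ c' ∈ cons, c.scope = c'.scope → c = c'

namespace Network

variable {V α : Type} [Fintype V] [DecidableEq V]

/-- `f` is an instantiation of the variables `Y`: each variable of `Y` gets a value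
from its domain. -/
def Inst (R : Network V α) (Y : Set V) (f : V → α) : Prop :=
  ∀ v ∈ Y, f v ∈ R.dom v

/-- `f` is a consistent instantiation of the variables `Y`: it is an instantiation of
`Y` satisfying every constraint whose scope is contained in `Y`. -/
def ConsistentOn (R : Network V α) (Y : Set V) (f : V → α) : Prop :=
  R.Inst Y f ∧ ∀ c ∈ R.cons, (c.scope : Set V) ⊆ Y → f ∈ c.allowed

/-- `R` is `k`-consistent: every consistent instantiation of any `k - 1` distinct
variables extends consistently to any further variable. -/
def KConsistent (R : Network V α) (k : ℕ) : Prop :=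
  ∀ (Y : Finset V) (f : V → α), Y.card + 1 = k → R.ConsistentOn ↑Y f →
    ∀ x ∉ Y, ∃ u ∈ R.dom x,
      R.ConsistentOn ↑(insert x Y) (Function.update f x u)

/-- `R` is strongly `k`-consistent: `j`-consistent for every `j ≤ k`. -/
def StronglyKConsistent (R : Network V α) (k : ℕ) : Prop :=
  ∀ j ≤ k, R.KConsistent j

/-- `R` is globally consistent: strongly `n`-consistent, `n` the number of variables. -/
def GloballyConsistent (R : Network V α) : Prop :=
  R.StronglyKConsistent (Fintype.card V)

/-- The extension set of an instantiation `f` (of `c.scope − {x}`) to `x` with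
respect to the constraint `c`: the values `b` of the domain of `x` such that the
extended instantiation satisfies `c`. -/
def extSet (R : Network V α) (c : Constraint V α) (x : V) (f : V → α) : Set α :=
  {b | b ∈ R.dom x ∧ Function.update f x b ∈ c.allowed}

/-- `c` is a relevant constraint on `x` with respect to `Y`: its scope contains `x`
and its other variables all belong to `Y`. -/
def Relevant (R : Network V α) (c : Constraint V α) (x : V) (Y : Set V) : Prop :=
  c ∈ R.cons ∧ x ∈ c.scope ∧ (↑(c.scope.erase x) : Set V) ⊆ Y

/-- `c` is properly `m`-tight with respect to `x`: every extension set to `x` has at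
most `m` elements. -/
def ProperlyTightWrt (R : Network V α) (c : Constraint V α) (x : V) (m : ℕ) : Prop :=
  ∀ f : V → α, R.Inst ↑(c.scope.erase x) f → (R.extSet c x f).ncard ≤ m

/-- `c` is properly `m`-tight: properly `m`-tight with respect to each of its
variables. -/
def ProperlyTight (R : Network V α) (c : Constraint V α) (m : ℕ) : Prop :=
  ∀ x ∈ c.scope, R.ProperlyTightWrt c x m

/-- `R` (with `n` variables) is weakly `m`-tight at level `k`: for every set `Y` of
`l` variables, `k ≤ l < n`, and every variable `x ∉ Y`, some relevant constraint on
`x` with respect to `Y` is properly `m`-tight. -/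
def WeaklyTight (R : Network V α) (m k : ℕ) : Prop :=
  ∀ Y : Finset V, k ≤ Y.card → Y.card < Fintype.card V →
    ∀ x ∉ Y, ∃ c, R.Relevant c x ↑Y ∧ R.ProperlyTight c m

/-- `R` is tree convex: there is a tree on the union of all the domains under which
every nonempty extension set of every constraint is tree convex (induces a connected
subgraph). -/
def TreeConvexNet (R : Network V α) : Prop :=
  ∃ T : SimpleGraph {a : α // a ∈ ⋃ v, (R.dom v : Set α)},
    T.IsTree ∧
      ∀ c ∈ R.cons, ∀ x ∈ c.scope, ∀ f : V → α,
        R.Inst ↑(c.scope.erase x) f → (R.extSet c x f).Nonempty →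
          (T.induce (Subtype.val ⁻¹' R.extSet c x f)).Connected

/-- `R` is relationally `m`-consistent: for any `m` distinct constraints, any common
variable `x` of their scopes, and any consistent instantiation of the union of their
scopes minus `x`, some value of the domain of `x` extends it to satisfy all `m`
constraints. -/
def RelConsistent (R : Network V α) (m : ℕ) : Prop :=
  ∀ cs : Fin m → Constraint V α, Function.Injective cs →
    (∀ i, cs i ∈ R.cons) → ∀ x : V, (∀ i, x ∈ (cs i).scope) →
      ∀ f : V → α, R.ConsistentOn ((⋃ i, ((cs i).scope : Set V)) \ {x}) f →
        ∃ u ∈ R.dom x, ∀ i, Function.update f x u ∈ (cs i).allowed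

/-- `R` is strongly relationally `m`-consistent. -/
def StronglyRelConsistent (R : Network V α) (m : ℕ) : Prop :=
  ∀ j ≤ m, R.RelConsistent j

end Network

/-- **Weak Tightness.**  A constraint network with constraints of arity at most `r`
that is strongly `((m+1)(r−1)+1)`-consistent and weakly `m`-tight at level
`(m+1)(r−1)+1` is globally consistent. -/
theorem Network.weaklyTight_globallyConsistent
    {V α : Type} [Fintype V] [DecidableEq V] (R : Network V α) (r m : ℕ)
    (harity : ∀ c ∈ R.cons, c.scope.card ≤ r)
    (hsc : R.StronglyKConsistent ((m + 1) * (r - 1) + 1))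
    (hwt : R.WeaklyTight m ((m + 1) * (r - 1) + 1)) :
    R.GloballyConsistent := by
  intro j hj
  by_cases hjK : j ≤ (m + 1) * (r - 1) + 1
  · exact hsc j hjK
  intro Y f hcard hf x hx
  by_contra hno
  push_neg at hno
  have hYK : (m + 1) * (r - 1) + 1 ≤ Y.card := by omega
  have hYlt : Y.card < Fintype.card V := by
    have h1 : Y.card < (insert x Y).card := by
      rw [Finset.card_insert_of_notMem hx]; omega
    exact lt_of_lt_of_le h1 (Finset.card_le_univ _)
  obtain ⟨c, ⟨hcC, hxc, hcsub⟩, htight⟩ := hwt Y hYK hYlt x hx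
  have hfInst : R.Inst ↑(c.scope.erase x) f := fun v hv => hf.1 v (hcsub hv)
  have hEle : (R.extSet c x f).ncard ≤ m := htight x hxc f hfInst
  have hEfin : (R.extSet c x f).Finite :=
    Set.Finite.subset (R.dom x).finite_toSet (fun b hb => hb.1)
  -- for each value in the extension set, the extension fails some constraint through x
  have hbad : ∀ b : α, ∃ c', b ∈ R.extSet c x f → c' ∈ R.cons ∧ x ∈ c'.scope ∧
      (↑(c'.scope.erase x) : Set V) ⊆ ↑Y ∧ Function.update f x b ∉ c'.allowed := by
    intro b
    by_cases hb : b ∈ R.extSet c x f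
    case neg => exact ⟨c, fun h => absurd h hb⟩
    refine ?_
    have hni := hno b hb.1
    have hInst : R.Inst ↑(insert x Y) (Function.update f x b) := by
      intro v hv
      rcases Finset.mem_insert.mp (by exact_mod_cast hv) with rfl | hvY
      · rw [Function.update_self]; exact hb.1
      · rw [Function.update_of_ne (by rintro rfl; exact hx hvY)]
        exact hf.1 v hvY
    rw [Network.ConsistentOn] at hni
    push_neg at hni
    obtain ⟨c', hc', hsub, hnall⟩ := hni hInst
    have hxc' : x ∈ c'.scope := by
      by_contra hxn
      apply hnall
      apply c'.allowed_ext f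
      · intro v hv
        exact (Function.update_of_ne (by rintro rfl; exact hxn hv) _ _).symm
      · apply hf.2 c' hc'
        intro v hv
        rcases Finset.mem_insert.mp (by exact_mod_cast hsub hv) with rfl | hvY
        · exact absurd hv hxn
        · exact hvY
    refine ⟨c', fun _ => ⟨hc', hxc', ?_, hnall⟩⟩
    intro v hv
    have hv' : v ∈ c'.scope.erase x := by exact_mod_cast hv
    rcases Finset.mem_insert.mp
        (by exact_mod_cast hsub (Finset.mem_coe.mpr (Finset.mem_of_mem_erase hv'))) with rfl | hvY
    · exact absurd rfl (Finset.ne_of_mem_erase hv')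
    · exact hvY
  choose g hg using hbad
  have hg1 : ∀ b ∈ R.extSet c x f, g b ∈ R.cons := fun b hb => (hg b hb).1
  have hg2 : ∀ b ∈ R.extSet c x f, x ∈ (g b).scope := fun b hb => (hg b hb).2.1
  have hg3 : ∀ b ∈ R.extSet c x f, (↑((g b).scope.erase x) : Set V) ⊆ ↑Y :=
    fun b hb => (hg b hb).2.2.1
  have hg4 : ∀ b ∈ R.extSet c x f, Function.update f x b ∉ (g b).allowed :=
    fun b hb => (hg b hb).2.2.2
  classical
  set Efin := hEfin.toFinset with hEfin_def
  have hEcard : Efin.card ≤ m := by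
    rwa [Set.ncard_eq_toFinset_card _ hEfin] at hEle
  set Z : Finset V := c.scope.erase x ∪ Efin.biUnion (fun b => (g b).scope.erase x) with hZdef
  have hZY : Z ⊆ Y := by
    intro v hv
    rcases Finset.mem_union.mp hv with h | h
    · exact hcsub (Finset.mem_coe.mpr h)
    · obtain ⟨b, hb, hv'⟩ := Finset.mem_biUnion.mp h
      have hbE : b ∈ R.extSet c x f := hEfin.mem_toFinset.mp hb
      exact hg3 b hbE (Finset.mem_coe.mpr hv')
  have hxZ : x ∉ Z := fun h => hx (hZY h)
  have hZcard : Z.card + 1 ≤ (m + 1) * (r - 1) + 1 := by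
    have h1 : (c.scope.erase x).card ≤ r - 1 := by
      rw [Finset.card_erase_of_mem hxc]
      exact Nat.sub_le_sub_right (harity c hcC) 1
    have h2 : (Efin.biUnion (fun b => (g b).scope.erase x)).card ≤ m * (r - 1) := by
      calc (Efin.biUnion (fun b => (g b).scope.erase x)).card
          ≤ ∑ b ∈ Efin, ((g b).scope.erase x).card := Finset.card_biUnion_le
        _ ≤ ∑ _b ∈ Efin, (r - 1) := by
            apply Finset.sum_le_sum
            intro b hb
            have hbE : b ∈ R.extSet c x f := hEfin.mem_toFinset.mp hb
            rw [Finset.card_erase_of_mem (hg2 b hbE)]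
            exact Nat.sub_le_sub_right (harity _ (hg1 b hbE)) 1
        _ = Efin.card * (r - 1) := by rw [Finset.sum_const, smul_eq_mul]
        _ ≤ m * (r - 1) := Nat.mul_le_mul_right _ hEcard
    have h3 : Z.card ≤ (c.scope.erase x).card +
        (Efin.biUnion (fun b => (g b).scope.erase x)).card := Finset.card_union_le _ _
    have h4 : (m + 1) * (r - 1) = m * (r - 1) + (r - 1) := by ring
    omega
  have hZcons : R.ConsistentOn ↑Z f := by
    refine ⟨fun v hv => hf.1 v (hZY hv), fun c' hc' hsub => hf.2 c' hc' ?_⟩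
    exact hsub.trans (Finset.coe_subset.mpr hZY)
  obtain ⟨u, hu, hucons⟩ := hsc (Z.card + 1) hZcard Z f rfl hZcons x hxZ
  have hscope : (c.scope : Set V) ⊆ ↑(insert x Z) := by
    intro v hv
    have hv' : v ∈ c.scope := by exact_mod_cast hv
    by_cases hvx : v = x
    · rw [hvx]; exact_mod_cast Finset.mem_insert_self x Z
    · have : v ∈ Z := Finset.mem_union_left _ (Finset.mem_erase.mpr ⟨hvx, hv'⟩)
      exact_mod_cast Finset.mem_insert_of_mem this
  have huE : u ∈ R.extSet c x f := ⟨hu, hucons.2 c hcC hscope⟩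
  apply hg4 u huE
  apply hucons.2 (g u) (hg1 u huE)
  intro v hv
  have hv' : v ∈ (g u).scope := by exact_mod_cast hv
  by_cases hvx : v = x
  · rw [hvx]; exact_mod_cast Finset.mem_insert_self x Z
  · have hvZ : v ∈ Z := by
      apply Finset.mem_union_right
      exact Finset.mem_biUnion.mpr ⟨u, hEfin.mem_toFinset.mpr huE,
        Finset.mem_erase.mpr ⟨hvx, hv'⟩⟩
    exact_mod_cast Finset.mem_insert_of_mem hvZ
end

section
/- Let R be a constraint network with n variables in which there is a binary constraint on every pair of distinct variables, and let k be a natural number with k < n. If for every variable x at least n−k of the binary constraints whose scope contains x are properly m-tight, then R is weakly m-tight at level k. -/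
/-- If there is a binary constraint on every pair of distinct variables, `k < n`, and
every variable is involved in at least `n − k` properly `m`-tight binary constraints,
then the network is weakly `m`-tight at level `k`. -/
theorem Network.weaklyTight_level_of_binary_tight
    {V α : Type} [Fintype V] [DecidableEq V] (R : Network V α) (m k : ℕ)
    (hk : k < Fintype.card V)
    (hbin : ∀ x y : V, x ≠ y → ∃ c ∈ R.cons, c.scope = {x, y})
    (htight : ∀ x : V,
      Fintype.card V - k ≤
        {c | c ∈ R.cons ∧ c.scope.card = 2 ∧ x ∈ c.scope ∧
          R.ProperlyTight c m}.ncard) :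
    R.WeaklyTight m k := by
  classical
  intro Y hkY hYn x hxY
  by_contra hcon
  push_neg at hcon
  set S : Set (Constraint V α) :=
    {c | c ∈ R.cons ∧ c.scope.card = 2 ∧ x ∈ c.scope ∧ R.ProperlyTight c m} with hSdef
  have hnotsub : ∀ c ∈ S, ¬ ((↑(c.scope.erase x) : Set V) ⊆ (↑Y : Set V)) := by
    intro c hc hsub
    exact hcon c ⟨hc.1, hc.2.2.1, hsub⟩ hc.2.2.2
  set φ : Constraint V α → V := fun c =>
    if h : (c.scope.erase x).Nonempty then h.choose else x with hφdef
  have hφmem : ∀ c ∈ S, φ c ∈ c.scope.erase x := by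
    intro c hc
    have h1 : (c.scope.erase x).card = 1 := by
      rw [Finset.card_erase_of_mem hc.2.2.1, hc.2.1]
    have hne : (c.scope.erase x).Nonempty := by
      rw [← Finset.card_pos, h1]; norm_num
    simp only [hφdef, dif_pos hne]
    exact hne.choose_spec
  have herase : ∀ c ∈ S, c.scope.erase x = {φ c} := by
    intro c hc
    have h1 : (c.scope.erase x).card = 1 := by
      rw [Finset.card_erase_of_mem hc.2.2.1, hc.2.1]
    obtain ⟨a, ha⟩ := Finset.card_eq_one.mp h1
    have := hφmem c hc
    rw [ha] at this ⊢
    simp_all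
  have hmap : ∀ c ∈ S, φ c ∈ (↑(Finset.univ \ insert x Y) : Set V) := by
    intro c hc
    have hm := hφmem c hc
    have hy : φ c ∉ Y := by
      intro hy
      apply hnotsub c hc
      rw [herase c hc]
      simpa using hy
    have hx : φ c ≠ x := Finset.ne_of_mem_erase hm
    simp [hx, hy]
  have hinj : Set.InjOn φ S := by
    intro c hc c' hc' he
    apply R.scope_inj c hc.1 c' hc'.1
    have e1 : c.scope = insert x {φ c} := by
      rw [← herase c hc, Finset.insert_erase hc.2.2.1]
    have e2 : c'.scope = insert x {φ c'} := by
      rw [← herase c' hc', Finset.insert_erase hc'.2.2.1]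
    rw [e1, e2, he]
  have hle : S.ncard ≤ (↑(Finset.univ \ insert x Y) : Set V).ncard :=
    Set.ncard_le_ncard_of_injOn φ hmap hinj (Finset.finite_toSet _)
  rw [Set.ncard_coe_finset, Finset.card_sdiff_of_subset (Finset.subset_univ _),
    Finset.card_insert_of_notMem hxY, Finset.card_univ] at hle
  have ht := htight x
  rw [← hSdef] at ht
  omega
end

section
/- Let R be a constraint network with n variables whose constraints are exactly one binary constraint on every pair of distinct variables and one ternary constraint on every set of three distinct variables. If R is weakly m-tight at level 2, then the number of its constraints that are properly m-tight is at least n(n−1)/2 − 2⌊n/3⌋ if n ≡ 0 or 1 (mod 3), and at least (n−2)(3n−1)/6 if n ≡ 2 (mod 3). -/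
namespace CherryAux
open Finset

variable {V : Type} [DecidableEq V]

lemma pair_struct {e : Finset V} {x : V} (he : e.card = 2) (hx : x ∈ e) :
    ∃ y, x ≠ y ∧ e = {x, y} := by
  obtain ⟨a, b, hab, rfl⟩ := Finset.card_eq_two.mp he
  rcases Finset.mem_insert.mp hx with rfl | hb
  · exact ⟨b, hab, rfl⟩
  · obtain rfl := Finset.mem_singleton.mp hb
    exact ⟨a, hab.symm, Finset.pair_comm a x⟩

lemma pair_eq {e : Finset V} {x a : V} (he : e.card = 2) (hx : x ∈ e) (ha : a ∈ e)
    (hxa : x ≠ a) : e = {x, a} := by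
  refine (Finset.eq_of_subset_of_card_le ?_ ?_).symm
  · intro t ht
    rcases Finset.mem_insert.mp ht with rfl | ht
    · exact hx
    · exact Finset.mem_singleton.mp ht ▸ ha
  · rw [he, Finset.card_insert_of_notMem (by simp [hxa]), Finset.card_singleton]

def cherries (E : Finset (Finset V)) : Finset (Finset V) :=
  ((E ×ˢ E).image fun p => p.1 ∪ p.2).filter fun A => A.card = 3

lemma mem_cherries {E : Finset (Finset V)} {A : Finset V} :
    A ∈ cherries E ↔ (∃ e ∈ E, ∃ f ∈ E, e ∪ f = A) ∧ A.card = 3 := by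
  simp only [cherries, mem_filter, mem_image, mem_product, Prod.exists]
  constructor
  · rintro ⟨⟨e, f, ⟨he, hf⟩, rfl⟩, h3⟩; exact ⟨⟨e, he, f, hf, rfl⟩, h3⟩
  · rintro ⟨⟨e, he, f, hf, rfl⟩, h3⟩; exact ⟨⟨e, f, ⟨he, hf⟩, rfl⟩, h3⟩

lemma cherries_mono {E E' : Finset (Finset V)} (h : E' ⊆ E) : cherries E' ⊆ cherries E := by
  intro A hA
  rw [mem_cherries] at *
  obtain ⟨⟨e, he, f, hf, h1⟩, h2⟩ := hA
  exact ⟨⟨e, h he, f, h hf, h1⟩, h2⟩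

lemma cherry_of_two {E : Finset (Finset V)} {e f : Finset V} {x : V}
    (h2 : ∀ g ∈ E, g.card = 2) (he : e ∈ E) (hf : f ∈ E)
    (hxe : x ∈ e) (hxf : x ∈ f) (hne : e ≠ f) :
    e ∪ f ∈ cherries E ∧ (e ∪ f).card = 3 ∧ x ∈ e ∪ f := by
  obtain ⟨a, hxa, he'⟩ := pair_struct (h2 e he) hxe
  obtain ⟨b, hxb, hf'⟩ := pair_struct (h2 f hf) hxf
  have hab : a ≠ b := by rintro rfl; rw [he', hf'] at hne; exact hne rfl
  have hU : e ∪ f = {x, a, b} := by rw [he', hf']; ext t; simp only [mem_union, mem_insert, mem_singleton]; tauto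
  have h3 : ({x, a, b} : Finset V).card = 3 := by
    rw [card_insert_of_notMem (by simp [hxa, hxb]),
      card_insert_of_notMem (by simp [hab]), card_singleton]
  have hc3 : (e ∪ f).card = 3 := by rw [hU]; exact h3
  exact ⟨mem_cherries.mpr ⟨⟨e, he, f, hf, rfl⟩, hc3⟩, hc3, Finset.mem_union_left _ hxe⟩

lemma union_struct {e f : Finset V} (he : e.card = 2) (hf : f.card = 2)
    (h3 : (e ∪ f).card = 3) :
    ∃ x y z, x ≠ y ∧ x ≠ z ∧ y ≠ z ∧ e = {x, y} ∧ f = {x, z} := by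
  have hi : (e ∩ f).card = 1 := by
    have := Finset.card_union_add_card_inter e f
    omega
  obtain ⟨x, hx⟩ := Finset.card_eq_one.mp hi
  have hxe : x ∈ e := Finset.mem_of_mem_inter_left (hx ▸ Finset.mem_singleton_self x)
  have hxf : x ∈ f := Finset.mem_of_mem_inter_right (hx ▸ Finset.mem_singleton_self x)
  obtain ⟨y, hxy, he'⟩ := pair_struct he hxe
  obtain ⟨z, hxz, hf'⟩ := pair_struct hf hxf
  refine ⟨x, y, z, hxy, hxz, ?_, he', hf'⟩
  rintro rfl
  have hy : y ∈ e ∩ f := Finset.mem_inter.mpr ⟨by simp [he'], by simp [hf']⟩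
  rw [hx, Finset.mem_singleton] at hy
  exact hxy hy.symm

lemma cherry_step (S X : Finset V) (E L : Finset (Finset V))
    (hL : L ⊆ cherries E)
    (hLX : ∀ A ∈ L, ∃ x ∈ X, x ∈ A)
    (hIH : (E.filter fun e => ∀ x ∈ X, x ∉ e).card
            ≤ (cherries (E.filter fun e => ∀ x ∈ X, x ∉ e)).card + 2 * (S \ X).card / 3)
    (hcnt : (E.filter fun e => ¬ ∀ x ∈ X, x ∉ e).card + 2 * (S \ X).card / 3
            ≤ L.card + 2 * S.card / 3) :
    E.card ≤ (cherries E).card + 2 * S.card / 3 := by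
  have hdisj : Disjoint L (cherries (E.filter fun e => ∀ x ∈ X, x ∉ e)) := by
    rw [disjoint_left]
    intro A hA hA'
    obtain ⟨x, hxX, hxA⟩ := hLX A hA
    obtain ⟨⟨e, he, f, hf, rfl⟩, _⟩ := mem_cherries.mp hA'
    rcases mem_union.mp hxA with h | h
    · exact (mem_filter.mp he).2 x hxX h
    · exact (mem_filter.mp hf).2 x hxX h
  have hsub : L ∪ cherries (E.filter fun e => ∀ x ∈ X, x ∉ e) ⊆ cherries E :=
    union_subset hL (cherries_mono (filter_subset _ _))
  have h2 : L.card + (cherries (E.filter fun e => ∀ x ∈ X, x ∉ e)).card ≤ (cherries E).card := by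
    rw [← card_union_of_disjoint hdisj]
    exact card_le_card hsub
  have h1 : (E.filter fun e => ∀ x ∈ X, x ∉ e).card
      + (E.filter fun e => ¬ ∀ x ∈ X, x ∉ e).card = E.card :=
    card_filter_add_card_filter_not _
  omega



lemma caseB2b (S : Finset V) (E : Finset (Finset V)) (h2 : ∀ g ∈ E, g.card = 2)
    (x : V) (hxS : x ∈ S) (g₀ g₁ f : Finset V)
    (hg₀ : g₀ ∈ E) (hg₁ : g₁ ∈ E) (hfE : f ∈ E)
    (hxg₀ : x ∈ g₀) (hxg₁ : x ∈ g₁) (hne01 : g₀ ≠ g₁)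
    (u : V) (hux : u ≠ x) (hu0 : u ∈ g₀) (huf : u ∈ f) (hne0f : g₀ ≠ f)
    (w : V) (hw1 : w ∈ g₁) (hwf : w ∉ f) (hwx : w ≠ x)
    (hExmem : ∀ e ∈ E, x ∈ e → e = g₀ ∨ e = g₁)
    (hIH : (E.filter fun e => ∀ v ∈ ({x} : Finset V), v ∉ e).card
        ≤ (cherries (E.filter fun e => ∀ v ∈ ({x} : Finset V), v ∉ e)).card
          + 2 * (S \ {x}).card / 3) :
    E.card ≤ (cherries E).card + 2 * S.card / 3 := by
  obtain ⟨hch1, -, -⟩ := cherry_of_two h2 hg₀ hg₁ hxg₀ hxg₁ hne01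
  obtain ⟨hch2, -, -⟩ := cherry_of_two h2 hg₀ hfE hu0 huf hne0f
  have hg₀eq : g₀ = {x, u} := pair_eq (h2 g₀ hg₀) hxg₀ hu0 hux.symm
  have hwg₀ : w ∉ g₀ := by
    rw [hg₀eq]
    simp only [mem_insert, mem_singleton]
    rintro (rfl | rfl)
    · exact hwx rfl
    · exact hwf huf
  have hLne : g₀ ∪ g₁ ≠ g₀ ∪ f := by
    intro h
    have hw : w ∈ g₀ ∪ f := h ▸ mem_union_right _ hw1
    rcases mem_union.mp hw with h' | h'
    · exact hwg₀ h'
    · exact hwf h'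
  refine cherry_step S {x} E {g₀ ∪ g₁, g₀ ∪ f} ?_ ?_ hIH ?_
  · intro A hA
    rcases mem_insert.mp hA with rfl | hA
    · exact hch1
    · rw [mem_singleton] at hA; rw [hA]; exact hch2
  · intro A hA
    refine ⟨x, mem_singleton_self x, ?_⟩
    rcases mem_insert.mp hA with rfl | hA
    · exact mem_union_left _ hxg₀
    · rw [mem_singleton] at hA; rw [hA]; exact mem_union_left _ hxg₀
  · have hnsub : (E.filter fun e => ¬ ∀ v ∈ ({x} : Finset V), v ∉ e) ⊆ {g₀, g₁} := by
      intro e he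
      rw [mem_filter] at he
      obtain ⟨heE, hne⟩ := he
      push_neg at hne
      obtain ⟨v, hv, hve⟩ := hne
      rw [mem_singleton] at hv
      subst hv
      rcases hExmem e heE hve with rfl | rfl <;> simp
    have h1 : (E.filter fun e => ¬ ∀ v ∈ ({x} : Finset V), v ∉ e).card ≤ 2 := by
      refine le_trans (card_le_card hnsub) ?_
      exact le_trans (card_insert_le _ _) (by simp)
    have hLcard : ({g₀ ∪ g₁, g₀ ∪ f} : Finset (Finset V)).card = 2 := by
      rw [card_insert_of_notMem (by simp [hLne]), card_singleton]
    have hsd : (S \ {x}).card = S.card - 1 := by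
      rw [card_sdiff_of_subset (singleton_subset_iff.mpr hxS), card_singleton]
    have hS1 : 1 ≤ S.card := card_pos.mpr ⟨x, hxS⟩
    rw [hLcard]
    omega

lemma cherry_bound : ∀ (n : ℕ) (S : Finset V) (E : Finset (Finset V)),
    S.card ≤ n → (∀ e ∈ E, e.card = 2) → (∀ e ∈ E, e ⊆ S) →
    E.card ≤ (cherries E).card + 2 * S.card / 3 := by
  intro n
  induction n with
  | zero =>
    intro S E hS h2 hsub
    have hE : E = ∅ := by
      rw [eq_empty_iff_forall_notMem]
      intro e he
      have h2e := h2 e he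
      have hS0 : S = ∅ := card_eq_zero.mp (Nat.le_zero.mp hS)
      have hsube := hsub e he
      rw [hS0, subset_empty] at hsube
      rw [hsube] at h2e
      simp at h2e
    simp [hE]
  | succ n IH =>
    intro S E hS h2 hsub
    rcases eq_empty_or_nonempty E with hE | hE
    · simp [hE]
    have hIH : ∀ X : Finset V, (∃ x ∈ X, x ∈ S) →
        (E.filter fun e => ∀ x ∈ X, x ∉ e).card
          ≤ (cherries (E.filter fun e => ∀ x ∈ X, x ∉ e)).card + 2 * (S \ X).card / 3 := by
      rintro X ⟨x, hxX, hxS⟩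
      apply IH
      · have hss : S \ X ⊂ S := by
          rw [Finset.ssubset_iff_of_subset sdiff_subset]
          exact ⟨x, hxS, fun h => (mem_sdiff.mp h).2 hxX⟩
        have := card_lt_card hss
        omega
      · exact fun e he => h2 e (mem_filter.mp he).1
      · intro e he
        rw [subset_sdiff]
        exact ⟨hsub e (mem_filter.mp he).1, disjoint_right.mpr (mem_filter.mp he).2⟩
    by_cases hone : ∃ e ∈ E, ∃ v ∈ e, (E.filter fun g => v ∈ g).card = 1
    · obtain ⟨e₀, he₀, x, hxe₀, hdx⟩ := hone
      have hxS : x ∈ S := hsub e₀ he₀ hxe₀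
      have hExeq : E.filter (fun g => x ∈ g) = {e₀} := by
        obtain ⟨g, hg⟩ := card_eq_one.mp hdx
        have he₀' : e₀ ∈ E.filter (fun g => x ∈ g) := mem_filter.mpr ⟨he₀, hxe₀⟩
        rw [hg, mem_singleton] at he₀'
        rw [hg, he₀']
      obtain ⟨y, hxy, he₀eq⟩ := pair_struct (h2 e₀ he₀) hxe₀
      have hye₀ : y ∈ e₀ := by rw [he₀eq]; simp
      have hyS : y ∈ S := hsub e₀ he₀ hye₀
      by_cases hdy : (E.filter fun g => y ∈ g).card = 1
      · -- isolated edge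
        have hEyeq : E.filter (fun g => y ∈ g) = {e₀} := by
          obtain ⟨g, hg⟩ := card_eq_one.mp hdy
          have he₀' : e₀ ∈ E.filter (fun g => y ∈ g) := mem_filter.mpr ⟨he₀, hye₀⟩
          rw [hg, mem_singleton] at he₀'
          rw [hg, he₀']
        refine cherry_step S {x, y} E ∅ (empty_subset _) (by simp)
          (hIH _ ⟨x, by simp, hxS⟩) ?_
        have hnsub : (E.filter fun e => ¬ ∀ v ∈ ({x, y} : Finset V), v ∉ e) ⊆ {e₀} := by
          intro e he
          rw [mem_filter] at he
          obtain ⟨heE, hne⟩ := he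
          push_neg at hne
          obtain ⟨v, hv, hve⟩ := hne
          rw [mem_insert, mem_singleton] at hv
          rw [mem_singleton]
          rcases hv with rfl | rfl
          · have h' : e ∈ E.filter (fun g => v ∈ g) := mem_filter.mpr ⟨heE, hve⟩
            rw [hExeq, mem_singleton] at h'; exact h'
          · have h' : e ∈ E.filter (fun g => v ∈ g) := mem_filter.mpr ⟨heE, hve⟩
            rw [hEyeq, mem_singleton] at h'; exact h'
        have h1 : (E.filter fun e => ¬ ∀ v ∈ ({x, y} : Finset V), v ∉ e).card ≤ 1 :=
          le_trans (card_le_card hnsub) (by simp)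
        have hXS : ({x, y} : Finset V) ⊆ S := by
          intro t ht
          rcases mem_insert.mp ht with rfl | ht
          · exact hxS
          · exact (mem_singleton.mp ht) ▸ hyS
        have hXcard : ({x, y} : Finset V).card = 2 := by
          rw [card_insert_of_notMem (by simp [hxy]), card_singleton]
        have hsd : (S \ {x, y}).card = S.card - 2 := by rw [card_sdiff_of_subset hXS, hXcard]
        have hS2 : 2 ≤ S.card := hXcard ▸ card_le_card hXS
        simp only [card_empty]
        omega
      · -- x degree 1, y degree ≥ 2
        have hdy1 : 1 ≤ (E.filter fun g => y ∈ g).card :=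
          card_pos.mpr ⟨e₀, mem_filter.mpr ⟨he₀, hye₀⟩⟩
        obtain ⟨f, hf, hfne⟩ := exists_mem_ne (s := E.filter fun g => y ∈ g) (by omega) e₀
        rw [mem_filter] at hf
        obtain ⟨hfE, hyf⟩ := hf
        obtain ⟨hch, -, -⟩ := cherry_of_two h2 he₀ hfE hye₀ hyf (fun h => hfne h.symm)
        refine cherry_step S {x} E {e₀ ∪ f} ?_ ?_ (hIH _ ⟨x, by simp, hxS⟩) ?_
        · intro A hA; rw [mem_singleton] at hA; rw [hA]; exact hch
        · intro A hA
          rw [mem_singleton] at hA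
          exact ⟨x, by simp, by rw [hA]; exact mem_union_left _ hxe₀⟩
        · have hnsub : (E.filter fun e => ¬ ∀ v ∈ ({x} : Finset V), v ∉ e) ⊆ {e₀} := by
            intro e he
            rw [mem_filter] at he
            obtain ⟨heE, hne⟩ := he
            push_neg at hne
            obtain ⟨v, hv, hve⟩ := hne
            rw [mem_singleton] at hv
            subst hv
            have h' : e ∈ E.filter (fun g => v ∈ g) := mem_filter.mpr ⟨heE, hve⟩
            rw [hExeq, mem_singleton] at h'
            rw [mem_singleton]; exact h'
          have h1 : (E.filter fun e => ¬ ∀ v ∈ ({x} : Finset V), v ∉ e).card ≤ 1 :=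
            le_trans (card_le_card hnsub) (by simp)
          have hsd : (S \ {x}).card = S.card - 1 := by
            rw [card_sdiff_of_subset (singleton_subset_iff.mpr hxS), card_singleton]
          have hS1 : 1 ≤ S.card := card_pos.mpr ⟨x, hxS⟩
          simp only [card_singleton]
          omega
    · push_neg at hone
      obtain ⟨e₀, he₀⟩ := hE
      have he₀2 := h2 e₀ he₀
      obtain ⟨x, hxe₀⟩ := card_pos.mp (by omega : 0 < e₀.card)
      have hxS : x ∈ S := hsub e₀ he₀ hxe₀
      have hdge : ∀ (e : Finset V), e ∈ E → ∀ v ∈ e, 2 ≤ (E.filter fun g => v ∈ g).card := by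
        intro e he v hv
        have h1 : 1 ≤ (E.filter fun g => v ∈ g).card :=
          card_pos.mpr ⟨e, mem_filter.mpr ⟨he, hv⟩⟩
        have := hone e he v hv
        omega
      by_cases hd3 : 3 ≤ (E.filter fun g => x ∈ g).card
      · -- degree ≥ 3
        obtain ⟨a₁, hxa₁, he₀eq⟩ := pair_struct he₀2 hxe₀
        have he₀Ex : e₀ ∈ E.filter fun g => x ∈ g := mem_filter.mpr ⟨he₀, hxe₀⟩
        have hmem : ∀ f ∈ (E.filter fun g => x ∈ g).erase e₀,
            f ∈ E ∧ x ∈ f ∧ f ≠ e₀ ∧ a₁ ∉ f := by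
          intro f hf
          have h1 := mem_of_mem_erase hf
          rw [mem_filter] at h1
          refine ⟨h1.1, h1.2, ne_of_mem_erase hf, ?_⟩
          intro ha₁f
          exact (ne_of_mem_erase hf)
            (by rw [pair_eq (h2 f h1.1) h1.2 ha₁f hxa₁, ← he₀eq])
        have hcer : 1 < ((E.filter fun g => x ∈ g).erase e₀).card := by
          rw [card_erase_of_mem he₀Ex]; omega
        obtain ⟨f₂, hf₂, f₃, hf₃, hf23⟩ := one_lt_card.mp hcer
        obtain ⟨hf₂E, hxf₂, hf₂e₀, ha₁f₂⟩ := hmem f₂ hf₂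
        obtain ⟨hf₃E, hxf₃, hf₃e₀, ha₁f₃⟩ := hmem f₃ hf₃
        obtain ⟨hch23, -, -⟩ := cherry_of_two h2 hf₂E hf₃E hxf₂ hxf₃ hf23
        have ha₁23 : a₁ ∉ f₂ ∪ f₃ := by
          rw [mem_union]; rintro (h | h)
          exacts [ha₁f₂ h, ha₁f₃ h]
        have hinj : Set.InjOn (fun f => e₀ ∪ f) ((E.filter fun g => x ∈ g).erase e₀) := by
          intro f hf f' hf' hU
          have hU' : e₀ ∪ f = e₀ ∪ f' := hU
          obtain ⟨hfE, hxf, hfne, ha₁f⟩ := hmem f (mem_coe.mp hf)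
          obtain ⟨hf'E, hxf', hf'ne, ha₁f'⟩ := hmem f' (mem_coe.mp hf')
          obtain ⟨b, hxb, hfeq⟩ := pair_struct (h2 f hfE) hxf
          obtain ⟨b', hxb', hf'eq⟩ := pair_struct (h2 f' hf'E) hxf'
          have hbf : b ∈ f := by rw [hfeq]; simp
          have hb : b ∈ e₀ ∪ f' := by rw [← hU']; exact mem_union_right _ hbf
          have hba₁ : b ≠ a₁ := by rintro rfl; exact ha₁f hbf
          have hbe₀ : b ∉ e₀ := by
            rw [he₀eq, mem_insert, mem_singleton]
            rintro (rfl | rfl)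
            · exact hxb rfl
            · exact hba₁ rfl
          have hbf' : b ∈ f' := (mem_union.mp hb).resolve_left hbe₀
          have hbb' : b = b' := by
            rw [hf'eq, mem_insert, mem_singleton] at hbf'
            rcases hbf' with h | h
            · exact absurd h.symm hxb
            · exact h
          rw [hfeq, hf'eq, hbb']
        have himcard : (((E.filter fun g => x ∈ g).erase e₀).image (fun f => e₀ ∪ f)).card
            = (E.filter fun g => x ∈ g).card - 1 := by
          rw [card_image_of_injOn hinj, card_erase_of_mem he₀Ex]
        have hnotim : f₂ ∪ f₃ ∉
            ((E.filter fun g => x ∈ g).erase e₀).image (fun f => e₀ ∪ f) := by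
          intro hmem'
          obtain ⟨f, hf, hfeq⟩ := mem_image.mp hmem'
          have ha₁ : a₁ ∈ f₂ ∪ f₃ := by
            rw [← hfeq]
            exact mem_union_left _ (by rw [he₀eq]; simp)
          exact ha₁23 ha₁
        refine cherry_step S {x} E
          ((((E.filter fun g => x ∈ g).erase e₀).image (fun f => e₀ ∪ f)) ∪ {f₂ ∪ f₃}) ?_ ?_
          (hIH _ ⟨x, by simp, hxS⟩) ?_
        · intro A hA
          rcases mem_union.mp hA with hA | hA
          · obtain ⟨f, hf, rfl⟩ := mem_image.mp hA
            obtain ⟨hfE, hxf, hfne, -⟩ := hmem f hf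
            exact (cherry_of_two h2 he₀ hfE hxe₀ hxf (fun h => hfne h.symm)).1
          · rw [mem_singleton] at hA; rw [hA]; exact hch23
        · intro A hA
          refine ⟨x, mem_singleton_self x, ?_⟩
          rcases mem_union.mp hA with hA | hA
          · obtain ⟨f, hf, rfl⟩ := mem_image.mp hA
            exact mem_union_left _ hxe₀
          · rw [mem_singleton] at hA; rw [hA]; exact mem_union_left _ hxf₂
        · have hLcard :
              (((((E.filter fun g => x ∈ g).erase e₀).image (fun f => e₀ ∪ f))) ∪ {f₂ ∪ f₃}).card
              = (E.filter fun g => x ∈ g).card := by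
            rw [card_union_of_disjoint (disjoint_singleton_right.mpr hnotim), himcard,
              card_singleton]
            omega
          have hnegeq : (E.filter fun e => ¬ ∀ v ∈ ({x} : Finset V), v ∉ e)
              = E.filter (fun g => x ∈ g) := by
            apply filter_congr
            intro e _
            simp
          have hsd : (S \ {x}).card = S.card - 1 := by
            rw [card_sdiff_of_subset (singleton_subset_iff.mpr hxS), card_singleton]
          have hS1 : 1 ≤ S.card := card_pos.mpr ⟨x, hxS⟩
          rw [hLcard, hnegeq]
          omega
      · -- degree of x is exactly 2
        have hdx2 : (E.filter fun g => x ∈ g).card = 2 := by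
          have := hdge e₀ he₀ x hxe₀; omega
        obtain ⟨g₀, g₁, hg01, hEx2⟩ := card_eq_two.mp hdx2
        have hg₀m : g₀ ∈ E.filter fun g => x ∈ g := by rw [hEx2]; simp
        have hg₁m : g₁ ∈ E.filter fun g => x ∈ g := by rw [hEx2]; simp
        rw [mem_filter] at hg₀m hg₁m
        obtain ⟨hg₀E, hxg₀⟩ := hg₀m
        obtain ⟨hg₁E, hxg₁⟩ := hg₁m
        obtain ⟨y, hxy, hg₀eq⟩ := pair_struct (h2 g₀ hg₀E) hxg₀
        obtain ⟨z, hxz, hg₁eq⟩ := pair_struct (h2 g₁ hg₁E) hxg₁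
        have hyz : y ≠ z := by rintro rfl; exact hg01 (by rw [hg₀eq, hg₁eq])
        have hExmem : ∀ e ∈ E, x ∈ e → e = g₀ ∨ e = g₁ := by
          intro e heE hxe
          have h' : e ∈ E.filter fun g => x ∈ g := mem_filter.mpr ⟨heE, hxe⟩
          rw [hEx2, mem_insert, mem_singleton] at h'
          exact h'
        have hyg₀ : y ∈ g₀ := by rw [hg₀eq]; simp
        have hzg₁ : z ∈ g₁ := by rw [hg₁eq]; simp
        by_cases hf : ∃ f ∈ E, (y ∈ f ∨ z ∈ f) ∧ f ≠ g₀ ∧ f ≠ g₁ ∧ f ≠ ({y, z} : Finset V)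
        · obtain ⟨f, hfE, hyzf, hfg₀, hfg₁, hfyz⟩ := hf
          rcases hyzf with hyf | hzf
          · have hzf : z ∉ f := by
              intro hzf
              exact hfyz (pair_eq (h2 f hfE) hyf hzf hyz)
            exact caseB2b S E h2 x hxS g₀ g₁ f hg₀E hg₁E hfE hxg₀ hxg₁ hg01
              y hxy.symm hyg₀ hyf hfg₀.symm
              z hzg₁ hzf hxz.symm hExmem (hIH _ ⟨x, by simp, hxS⟩)
          · have hyf : y ∉ f := by
              intro hyf
              exact hfyz (pair_eq (h2 f hfE) hyf hzf hyz)
            exact caseB2b S E h2 x hxS g₁ g₀ f hg₁E hg₀E hfE hxg₁ hxg₀ hg01.symm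
              z hxz.symm hzg₁ hzf hfg₁.symm
              y hyg₀ hyf hxy.symm (fun e he hx => (hExmem e he hx).symm)
              (hIH _ ⟨x, by simp, hxS⟩)
        · push_neg at hf
          have hdy := hdge g₀ hg₀E y hyg₀
          obtain ⟨f, hfm, hfne⟩ := exists_mem_ne (s := E.filter fun g => y ∈ g) (by omega) g₀
          rw [mem_filter] at hfm
          obtain ⟨hfE, hyf⟩ := hfm
          have hfg₁ : f ≠ g₁ := by
            intro h
            rw [h, hg₁eq, mem_insert, mem_singleton] at hyf
            rcases hyf with h' | h'
            · exact hxy h'.symm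
            · exact hyz h'
          have hfeq : f = {y, z} := hf f hfE (Or.inl hyf) hfne hfg₁
          obtain ⟨hch1, -, -⟩ := cherry_of_two h2 hg₀E hg₁E hxg₀ hxg₁ hg01
          have hyS : y ∈ S := hsub g₀ hg₀E hyg₀
          have hzS : z ∈ S := hsub g₁ hg₁E hzg₁
          refine cherry_step S {x, y, z} E {g₀ ∪ g₁} ?_ ?_ (hIH _ ⟨x, by simp, hxS⟩) ?_
          · intro A hA; rw [mem_singleton] at hA; rw [hA]; exact hch1
          · intro A hA
            rw [mem_singleton] at hA
            exact ⟨x, by simp, by rw [hA]; exact mem_union_left _ hxg₀⟩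
          · have hnsub : (E.filter fun e => ¬ ∀ v ∈ ({x, y, z} : Finset V), v ∉ e)
                ⊆ {g₀, g₁, ({y, z} : Finset V)} := by
              intro e he
              rw [mem_filter] at he
              obtain ⟨heE, hne⟩ := he
              push_neg at hne
              obtain ⟨v, hv, hve⟩ := hne
              simp only [mem_insert, mem_singleton] at hv ⊢
              rcases hv with rfl | rfl | rfl
              · rcases hExmem e heE hve with rfl | rfl
                · left; rfl
                · right; left; rfl
              · by_cases h0 : e = g₀
                · left; exact h0
                by_cases h1 : e = g₁
                · right; left; exact h1
                · right; right; exact hf e heE (Or.inl hve) h0 h1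
              · by_cases h0 : e = g₀
                · left; exact h0
                by_cases h1 : e = g₁
                · right; left; exact h1
                · right; right; exact hf e heE (Or.inr hve) h0 h1
            have h1 : (E.filter fun e => ¬ ∀ v ∈ ({x, y, z} : Finset V), v ∉ e).card ≤ 3 := by
              refine le_trans (card_le_card hnsub) ?_
              refine le_trans (card_insert_le _ _) ?_
              exact Nat.succ_le_succ (le_trans (card_insert_le _ _) (by simp))
            have hXsub : ({x, y, z} : Finset V) ⊆ S := by
              intro t ht
              simp only [mem_insert, mem_singleton] at ht
              rcases ht with rfl | rfl | rfl
              exacts [hxS, hyS, hzS]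
            have hXcard : ({x, y, z} : Finset V).card = 3 := by
              rw [card_insert_of_notMem (by simp [hxy, hxz]),
                card_insert_of_notMem (by simp [hyz]), card_singleton]
            have hsd : (S \ {x, y, z}).card = S.card - 3 := by rw [card_sdiff_of_subset hXsub, hXcard]
            have hS3 : 3 ≤ S.card := hXcard ▸ card_le_card hXsub
            simp only [card_singleton]
            omega

end CherryAux

/-- Lower bound on the number of properly `m`-tight constraints of a network, with
exactly one binary constraint on every pair of distinct variables and one ternary
constraint on every three distinct variables, that is weakly `m`-tight at level `2`:
at least `n(n−1)/2 − 2⌊n/3⌋` constraints are properly `m`-tight if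
`n ≡ 0, 1 (mod 3)`, and at least `(n−2)(3n−1)/6` otherwise. -/
theorem Network.weaklyTight_min_tight_count
    {V α : Type} [Fintype V] [DecidableEq V] (R : Network V α) (m : ℕ)
    (hexist : ∀ S : Finset V, S.card = 2 ∨ S.card = 3 → ∃ c ∈ R.cons, c.scope = S)
    (honly : ∀ c ∈ R.cons, c.scope.card = 2 ∨ c.scope.card = 3)
    (hwt : R.WeaklyTight m 2) :
    (Fintype.card V % 3 = 0 ∨ Fintype.card V % 3 = 1 →
      Fintype.card V * (Fintype.card V - 1) / 2 - 2 * (Fintype.card V / 3) ≤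
        {c | c ∈ R.cons ∧ R.ProperlyTight c m}.ncard) ∧
    (Fintype.card V % 3 = 2 →
      (Fintype.card V - 2) * (3 * Fintype.card V - 1) / 6 ≤
        {c | c ∈ R.cons ∧ R.ProperlyTight c m}.ncard) := by
  classical
  have hn : (Finset.univ : Finset V).card = Fintype.card V := Finset.card_univ
  set n := Fintype.card V with hndef
  by_cases hn3 : n < 3
  · constructor
    · intro h
      have h01 : n = 0 ∨ n = 1 := by omega
      rcases h01 with h0 | h0 <;> rw [h0] <;> simp
    · intro h
      have h2' : n = 2 := by omega
      rw [h2']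
      simp
  · push_neg at hn3
    obtain ⟨S₀, hS₀sub, hS₀⟩ := (Finset.exists_subset_card_eq (s := (Finset.univ : Finset V)) (n := 2) (by omega) : ∃ t ⊆ Finset.univ, t.card = 2)
    have hCex : ∀ S : Finset V,
        ∃ c : Constraint V α, (S.card = 2 ∨ S.card = 3) → c ∈ R.cons ∧ c.scope = S := by
      intro S
      by_cases h : S.card = 2 ∨ S.card = 3
      · obtain ⟨c, hc⟩ := hexist S h
        exact ⟨c, fun _ => hc⟩
      · exact ⟨(hexist S₀ (Or.inl hS₀)).choose, fun h' => absurd h' h⟩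
    choose conF hconF using hCex
    have hconF_eq : ∀ c ∈ R.cons, (c.scope.card = 2 ∨ c.scope.card = 3) → c = conF c.scope :=
      fun c hc h => R.scope_inj c hc _ (hconF c.scope h).1 ((hconF c.scope h).2).symm
    set P2 := (Finset.univ : Finset V).powersetCard 2 with hP2
    set E := P2.filter (fun S => ¬ R.ProperlyTight (conF S) m) with hE
    have hEcard2 : ∀ e ∈ E, e.card = 2 :=
      fun e he => (Finset.mem_powersetCard.mp (Finset.mem_filter.mp he).1).2
    have hEsub : ∀ e ∈ E, e ⊆ Finset.univ :=
      fun e he => (Finset.mem_powersetCard.mp (Finset.mem_filter.mp he).1).1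
    have htight3 : ∀ A ∈ CherryAux.cherries E, A.card = 3 ∧ R.ProperlyTight (conF A) m := by
      intro A hA
      obtain ⟨⟨e, he, f, hf, hU⟩, h3⟩ := CherryAux.mem_cherries.mp hA
      obtain ⟨x, y, z, hxy, hxz, hyz, hee, hff⟩ :=
        CherryAux.union_struct (hEcard2 e he) (hEcard2 f hf) (by rw [hU]; exact h3)
      have hAeq : A = {x, y, z} := by
        rw [← hU, hee, hff]
        ext t
        simp only [Finset.mem_union, Finset.mem_insert, Finset.mem_singleton]
        tauto
      have hyzcard : ({y, z} : Finset V).card = 2 := by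
        rw [Finset.card_insert_of_notMem (by simp [hyz]), Finset.card_singleton]
      have hxyz : x ∉ ({y, z} : Finset V) := by
        simp only [Finset.mem_insert, Finset.mem_singleton]
        rintro (rfl | rfl)
        · exact hxy rfl
        · exact hxz rfl
      obtain ⟨c, ⟨hc_mem, hc_x, hc_sc⟩, hc_t⟩ :=
        hwt {y, z} (by rw [hyzcard]) (by rw [hyzcard]; omega) x hxyz
      have hscF : c.scope.erase x ⊆ ({y, z} : Finset V) := Finset.coe_subset.mp hc_sc
      refine ⟨by rw [hAeq]; rw [Finset.card_insert_of_notMem hxyz, hyzcard], ?_⟩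
      rcases honly c hc_mem with h2' | h3'
      · exfalso
        obtain ⟨w, hxw, hcsc⟩ := CherryAux.pair_struct h2' hc_x
        have hwyz : w ∈ ({y, z} : Finset V) := by
          apply hscF
          rw [hcsc, Finset.erase_insert (by simp [hxw])]
          exact Finset.mem_singleton_self w
        rw [Finset.mem_insert, Finset.mem_singleton] at hwyz
        have hctight := hc_t
        rcases hwyz with rfl | rfl
        · have hce : c = conF e := by
            rw [← hee] at hcsc
            have := hconF_eq c hc_mem (by rw [hcsc]; exact Or.inl (hEcard2 e he))
            rw [hcsc] at this
            exact this
          rw [hce] at hctight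
          exact (Finset.mem_filter.mp he).2 hctight
        · have hce : c = conF f := by
            rw [← hff] at hcsc
            have := hconF_eq c hc_mem (by rw [hcsc]; exact Or.inl (hEcard2 f hf))
            rw [hcsc] at this
            exact this
          rw [hce] at hctight
          exact (Finset.mem_filter.mp hf).2 hctight
      · have herase2 : (c.scope.erase x).card = 2 := by
          rw [Finset.card_erase_of_mem hc_x, h3']
        have heryz : c.scope.erase x = ({y, z} : Finset V) :=
          Finset.eq_of_subset_of_card_le hscF (by rw [hyzcard, herase2])
        have hcsc : c.scope = A := by
          rw [hAeq, ← heryz, Finset.insert_erase hc_x]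
        have hce : c = conF A := by
          have := hconF_eq c hc_mem (by rw [hcsc, hAeq]; right
                                        rw [Finset.card_insert_of_notMem hxyz, hyzcard])
          rw [hcsc] at this
          exact this
        rw [← hce]
        exact hc_t
    have htight2 : ∀ S ∈ P2 \ E, R.ProperlyTight (conF S) m := by
      intro S hS
      rw [Finset.mem_sdiff] at hS
      by_contra h
      exact hS.2 (Finset.mem_filter.mpr ⟨hS.1, h⟩)
    set T := (P2 \ E) ∪ CherryAux.cherries E with hT
    have hTcards : ∀ S ∈ T, S.card = 2 ∨ S.card = 3 := by
      intro S hS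
      rcases Finset.mem_union.mp hS with h | h
      · exact Or.inl (Finset.mem_powersetCard.mp (Finset.mem_sdiff.mp h).1).2
      · exact Or.inr (htight3 S h).1
    have hTtight : ∀ S ∈ T, conF S ∈ R.cons ∧ R.ProperlyTight (conF S) m := by
      intro S hS
      refine ⟨(hconF S (hTcards S hS)).1, ?_⟩
      rcases Finset.mem_union.mp hS with h | h
      · exact htight2 S h
      · exact (htight3 S h).2
    set F := R.cons_finite.toFinset.filter (fun c => R.ProperlyTight c m) with hF
    have hmap : ∀ S ∈ T, conF S ∈ F := by
      intro S hS
      exact Finset.mem_filter.mpr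
        ⟨(Set.Finite.mem_toFinset _).mpr (hTtight S hS).1, (hTtight S hS).2⟩
    have hinj : Set.InjOn conF ↑T := by
      intro a ha b hb hab
      have h1 := (hconF a (hTcards a ha)).2
      have h2' := (hconF b (hTcards b hb)).2
      rw [← h1, ← h2', hab]
    have hcardT : T.card ≤ F.card := Finset.card_le_card_of_injOn conF hmap hinj
    have hsetF : {c | c ∈ R.cons ∧ R.ProperlyTight c m} = ↑F := by
      ext c
      simp only [hF, Finset.coe_filter, Set.Finite.mem_toFinset, Set.mem_setOf_eq]
    rw [hsetF, Set.ncard_coe_finset]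
    have hdisjT : Disjoint (P2 \ E) (CherryAux.cherries E) := by
      rw [Finset.disjoint_left]
      intro A h1 h2'
      have ha := (Finset.mem_powersetCard.mp (Finset.mem_sdiff.mp h1).1).2
      have hb := (htight3 A h2').1
      omega
    have hTcard : T.card = (P2.card - E.card) + (CherryAux.cherries E).card := by
      rw [hT, Finset.card_union_of_disjoint hdisjT, Finset.card_sdiff_of_subset (Finset.filter_subset _ _)]
    have hEP2 : E.card ≤ P2.card := Finset.card_le_card (Finset.filter_subset _ _)
    have hbound := CherryAux.cherry_bound (Finset.univ : Finset V).card
      (Finset.univ : Finset V) E le_rfl hEcard2 hEsub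
    rw [hn] at hbound
    have hP2card : P2.card = n.choose 2 := by
      rw [hP2, Finset.card_powersetCard, hn]
    have hch2 : n.choose 2 = n * (n - 1) / 2 := Nat.choose_two_right n
    have heven : n * (n - 1) % 2 = 0 := by
      have h1 : Even ((n - 1) * (n - 1 + 1)) := Nat.even_mul_succ_self (n - 1)
      have h2' : n - 1 + 1 = n := by omega
      rw [h2', Nat.mul_comm] at h1
      exact Nat.even_iff.mp h1
    constructor
    · intro hmod
      omega
    · intro hmod
      have hq : (n - 2) * (3 * n - 1) + 4 * n = 3 * (n * (n - 1)) + 2 := by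
        obtain ⟨q, hq'⟩ : ∃ q, n = q + 3 := ⟨n - 3, by omega⟩
        have e1 : q + 3 - 2 = q + 1 := by omega
        have e2 : 3 * (q + 3) - 1 = 3 * q + 8 := by omega
        have e3 : q + 3 - 1 = q + 2 := by omega
        rw [hq', e1, e2, e3]
        ring
      omega
end

section
/- Given a constraint network and a total ordering x_1 < … < x_n of its variables, if the network is adaptively consistent with respect to this ordering, then a backtrack-free search is ensured: for every k < n, every consistent instantiation of {x_1, …, x_k} can be extended by a value for x_{k+1} from its domain to a consistent instantiation of {x_1, …, x_{k+1}}. -/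
/-- With the variables totally ordered as `Fin n`, the directionally relevant
constraints on a variable `x`: those whose scope contains `x` and otherwise only
variables preceding `x`. -/
def Network.DR {n : ℕ} {α : Type} (R : Network (Fin n) α) (x : Fin n) :
    Set (Constraint (Fin n) α) :=
  {c | c ∈ R.cons ∧ x ∈ c.scope ∧ ∀ v ∈ c.scope, v ≤ x}

/-- A set `Cs` of constraints (from `DR x`), with `S` the set of all variables
occurring in them, is consistent on `x` if every consistent instantiation of
`S − {x}` extends by a value of the domain of `x` to satisfy all constraints
of `Cs`. -/
def Network.ConsistentOnVar {n : ℕ} {α : Type} (R : Network (Fin n) α)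
    (Cs : Set (Constraint (Fin n) α)) (x : Fin n) : Prop :=
  ∀ f : Fin n → α,
    R.ConsistentOn ((⋃ c ∈ Cs, (c.scope : Set (Fin n))) \ {x}) f →
      ∃ u ∈ R.dom x, ∀ c ∈ Cs, Function.update f x u ∈ c.allowed

/-- Backtrack-free search: for every `k < n`, every consistent instantiation of the
first `k` variables extends by a value for the `(k+1)`-st variable from its domain
to a consistent instantiation of the first `k + 1` variables. -/
def Network.BacktrackFree {n : ℕ} {α : Type} (R : Network (Fin n) α) : Prop :=
  ∀ (k : ℕ) (hk : k < n), ∀ f : Fin n → α,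
    R.ConsistentOn {i : Fin n | (i : ℕ) < k} f →
      ∃ u ∈ R.dom ⟨k, hk⟩,
        R.ConsistentOn {i : Fin n | (i : ℕ) < k + 1} (Function.update f ⟨k, hk⟩ u)

/-- The network is adaptively consistent (w.r.t. the ordering of its variables) if
for every variable `x` the whole set `DR x` of directionally relevant constraints on
`x` is consistent on `x`. -/
def Network.AdaptivelyConsistent {n : ℕ} {α : Type} (R : Network (Fin n) α) : Prop :=
  ∀ x : Fin n, R.ConsistentOnVar (R.DR x) x

/-- An adaptively consistent constraint network admits backtrack-free search. -/
theorem Network.adaptivelyConsistent_backtrackFree {n : ℕ} {α : Type}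
    (R : Network (Fin n) α) (hac : R.AdaptivelyConsistent) :
    R.BacktrackFree := by
  intro k hk f hf
  set x : Fin n := ⟨k, hk⟩ with hx
  have hsub : (⋃ c ∈ R.DR x, (c.scope : Set (Fin n))) \ {x} ⊆ {i : Fin n | (i : ℕ) < k} := by
    rintro v ⟨hv1, hv2⟩
    simp only [Set.mem_iUnion] at hv1
    obtain ⟨c, hc, hvc⟩ := hv1
    have hle : v ≤ x := hc.2.2 v hvc
    have : v ≠ x := hv2
    have : (v : ℕ) < k := by
      rcases lt_or_eq_of_le hle with h | h
      · exact h
      · exact absurd (Fin.ext (by simpa using congrArg Fin.val h)) this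
    exact this
  have hcon : R.ConsistentOn ((⋃ c ∈ R.DR x, (c.scope : Set (Fin n))) \ {x}) f := by
    constructor
    · intro v hv; exact hf.1 v (hsub hv)
    · intro c hc hsc; exact hf.2 c hc (hsc.trans hsub)
  obtain ⟨u, hu, hall⟩ := hac x f hcon
  refine ⟨u, hu, ?_, ?_⟩
  · intro v hv
    by_cases hvx : v = x
    · subst hvx; simpa using hu
    · rw [Function.update_of_ne hvx]
      apply hf.1
      have hvk : (v : ℕ) < k + 1 := hv
      have : (v : ℕ) ≠ k := fun h => hvx (Fin.ext h)
      exact Nat.lt_of_le_of_ne (Nat.lt_succ_iff.mp hvk) this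
  · intro c hc hsc
    by_cases hxc : x ∈ c.scope
    · apply hall c
      refine ⟨hc, hxc, ?_⟩
      intro v hv
      have : (v : ℕ) < k + 1 := hsc (by exact_mod_cast hv)
      exact Fin.le_def.mpr (Nat.lt_succ_iff.mp this)
    · have hf_c : f ∈ c.allowed := by
        apply hf.2 c hc
        intro v hv
        have hvk : (v : ℕ) < k + 1 := hsc hv
        have : (v : ℕ) ≠ k := fun h => hxc (by rwa [show v = x from Fin.ext h] at hv)
        exact Nat.lt_of_le_of_ne (Nat.lt_succ_iff.mp hvk) this
      exact c.allowed_ext f _ (fun v hv => (Function.update_of_ne (fun h : v = x => hxc (h ▸ hv)) u f).symm) hf_c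
end

section
/- Given a constraint network and a total ordering x_1 < … < x_n of its variables, if the network is dually adaptively consistent with respect to this ordering, then a backtrack-free search is ensured: for every k < n, every consistent instantiation of {x_1, …, x_k} can be extended by a value for x_{k+1} from its domain to a consistent instantiation of {x_1, …, x_{k+1}}. -/
/-- A dually adaptively consistent constraint network admits backtrack-free search.
Here, for each variable `x` (with `DR x` nonempty), `cx x` is a tightest
directionally relevant constraint on `x`: it belongs to `DR x`, is properly
`(mx x)`-tight with respect to `x`, and `mx x` is minimal over the constraints of
`DR x`.  Dually adaptive consistency: (1) for every `x` whose width `|DR x|` is at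
most `mx x`, the whole of `DR x` is consistent on `x`; (2) for every `x` whose width
exceeds `mx x` and every `mx x` constraints of `DR x` other than `cx x`, these
together with `cx x` are consistent on `x`. -/
theorem Network.duallyAdaptivelyConsistent_backtrackFree {n : ℕ} {α : Type}
    (R : Network (Fin n) α)
    (cx : Fin n → Constraint (Fin n) α) (mx : Fin n → ℕ)
    (hcx : ∀ x, (R.DR x).Nonempty → cx x ∈ R.DR x)
    (hcx_tight : ∀ x, (R.DR x).Nonempty → R.ProperlyTightWrt (cx x) x (mx x))
    (hmx_min : ∀ x, (R.DR x).Nonempty → ∀ c ∈ R.DR x, ∀ m' : ℕ,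
      R.ProperlyTightWrt c x m' → mx x ≤ m')
    (h1 : ∀ x : Fin n, (R.DR x).ncard ≤ mx x → R.ConsistentOnVar (R.DR x) x)
    (h2 : ∀ x : Fin n, mx x < (R.DR x).ncard →
      ∀ Cs ⊆ R.DR x \ {cx x}, Cs.ncard = mx x →
        R.ConsistentOnVar (insert (cx x) Cs) x) :
    R.BacktrackFree := by
  intro k hk f hf
  set x : Fin n := ⟨k, hk⟩ with hxdef
  -- basic facts
  have hmono : ∀ (Y Y' : Set (Fin n)) (g : Fin n → α), Y ⊆ Y' → R.ConsistentOn Y' g →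
      R.ConsistentOn Y g := by
    rintro Y Y' g hYY ⟨hI, hC⟩
    exact ⟨fun v hv => hI v (hYY hv), fun c hc hs => hC c hc (hs.trans hYY)⟩
  have hDRsub : ∀ c ∈ R.DR x, (c.scope : Set (Fin n)) \ {x} ⊆ {i : Fin n | (i : ℕ) < k} := by
    rintro c ⟨_, _, hle⟩ v ⟨hv, hvx⟩
    have := hle v hv
    simp only [Set.mem_singleton_iff] at hvx
    have : (v : ℕ) ≤ k := this
    exact lt_of_le_of_ne this (fun h => hvx (Fin.ext h))
  -- it suffices to find u in dom x satisfying all constraints of DR x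
  have key : ∀ u ∈ R.dom x, (∀ c ∈ R.DR x, Function.update f x u ∈ c.allowed) →
      R.ConsistentOn {i : Fin n | (i : ℕ) < k + 1} (Function.update f x u) := by
    intro u hu hall
    constructor
    · intro v hv
      by_cases hvx : v = x
      · subst hvx; simpa using hu
      · rw [Function.update_of_ne hvx]
        refine hf.1 v ?_
        simp only [Set.mem_setOf_eq] at hv ⊢
        have : (v : ℕ) ≠ k := fun h => hvx (Fin.ext h)
        omega
    · intro c hc hs
      by_cases hxc : x ∈ c.scope
      · refine hall c ⟨hc, hxc, ?_⟩
        intro v hv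
        have : (v : ℕ) < k + 1 := hs hv
        exact Nat.lt_succ_iff.mp this
      · have hscope : ∀ v ∈ c.scope, f v = Function.update f x u v := by
          intro v hv
          rw [Function.update_of_ne (fun h => hxc (by rw [← h]; exact hv))]
        refine c.allowed_ext f _ hscope (hf.2 c hc ?_)
        intro v hv
        have h1 : (v : ℕ) < k + 1 := hs hv
        have h2 : v ≠ x := fun h => hxc (h ▸ hv)
        have : (v : ℕ) ≠ k := fun h => h2 (Fin.ext h)
        simp only [Set.mem_setOf_eq]; omega
  -- main case split
  by_cases hne : (R.DR x).Nonempty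
  · have hDRfin : (R.DR x).Finite := R.cons_finite.subset (fun c hc => hc.1)
    -- consistency of f on union of scopes minus x, for any Cs ⊆ DR x
    have hcons : ∀ Cs : Set (Constraint (Fin n) α), Cs ⊆ R.DR x →
        R.ConsistentOn ((⋃ c ∈ Cs, (c.scope : Set (Fin n))) \ {x}) f := by
      intro Cs hCs
      refine hmono _ _ _ ?_ hf
      rintro v ⟨hv, hvx⟩
      simp only [Set.mem_iUnion] at hv
      obtain ⟨c, hc, hvc⟩ := hv
      exact hDRsub c (hCs hc) ⟨hvc, hvx⟩
    by_cases hcard : (R.DR x).ncard ≤ mx x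
    · obtain ⟨u, hu, hall⟩ := h1 x hcard f (hcons _ (subset_refl _))
      exact ⟨u, hu, key u hu hall⟩
    · push_neg at hcard
      -- suppose no value works; derive contradiction
      by_cases hgood : ∃ u ∈ R.dom x, ∀ c ∈ R.DR x, Function.update f x u ∈ c.allowed
      · obtain ⟨u, hu, hall⟩ := hgood
        exact ⟨u, hu, key u hu hall⟩
      · exfalso
        push_neg at hgood
        set E : Set α := R.extSet (cx x) x f with hE
        have hEfin : E.Finite := (R.dom x).finite_toSet.subset (fun b hb => hb.1)
        have hEcard : E.ncard ≤ mx x := by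
          refine hcx_tight x hne f ?_
          intro v hv
          refine hf.1 v (hDRsub (cx x) (hcx x hne) ?_)
          simp only [Finset.coe_erase, Set.mem_diff, Set.mem_singleton_iff] at hv ⊢
          exact hv
        -- for each u in E, a witness constraint violated by u
        have hw : ∀ u : α, ∃ c, u ∈ E →
            c ∈ R.DR x \ {cx x} ∧ Function.update f x u ∉ c.allowed := by
          intro u
          by_cases huE : u ∈ E
          · obtain ⟨hu, hcu⟩ := huE
            obtain ⟨c, hc, hviol⟩ := hgood u hu
            refine ⟨c, fun _ => ⟨⟨hc, ?_⟩, hviol⟩⟩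
            simp only [Set.mem_singleton_iff]
            rintro rfl; exact hviol hcu
          · exact ⟨cx x, fun h => absurd h huE⟩
        choose w hw using hw
        set Cs0 : Set (Constraint (Fin n) α) := w '' E with hCs0
        have hCs0sub : Cs0 ⊆ R.DR x \ {cx x} := by
          rintro c ⟨u, hu, rfl⟩; exact (hw u hu).1
        have hCs0card : Cs0.ncard ≤ mx x :=
          le_trans (Set.ncard_image_le hEfin) hEcard
        have hDcard : mx x ≤ (R.DR x \ {cx x}).ncard := by
          rw [Set.ncard_diff_singleton_of_mem (hcx x hne)]
          omega
        obtain ⟨Cs, hCs0Cs, hCssub, hCscard⟩ :=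
          Set.exists_subsuperset_card_eq hCs0sub hCs0card hDcard
        have hCsDR : insert (cx x) Cs ⊆ R.DR x := by
          rintro c hc
          rcases hc with rfl | hc
          · exact hcx x hne
          · exact (hCssub hc).1
        obtain ⟨u, hu, hall⟩ := h2 x hcard Cs hCssub hCscard f (hcons _ hCsDR)
        have hucx : Function.update f x u ∈ (cx x).allowed :=
          hall (cx x) (Set.mem_insert _ _)
        have huE : u ∈ E := ⟨hu, hucx⟩
        exact (hw u huE).2 (hall (w u) (Set.mem_insert_of_mem _ (hCs0Cs ⟨u, huE, rfl⟩)))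
  · -- DR x empty: any domain value works
    obtain ⟨u, hu⟩ := R.dom_nonempty x
    refine ⟨u, hu, key u hu ?_⟩
    intro c hc
    exact absurd ⟨c, hc⟩ hne
end

section
/- Let R be a tree convex constraint network. If R is strongly relationally 2-consistent (strongly relationally path consistent), then R is globally consistent. -/
namespace TreeHelly

open SimpleGraph Walk

variable {W : Type} {T : SimpleGraph W}

/-- Path convexity of a set of vertices. -/
def TConv (T : SimpleGraph W) (A : Set W) : Prop :=
  ∀ a ∈ A, ∀ b ∈ A, ∀ p : T.Walk a b, p.IsPath → ∀ v ∈ p.support, v ∈ A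

lemma TConv.inter {A B : Set W} (hA : TConv T A) (hB : TConv T B) :
    TConv T (A ∩ B) := fun a ha b hb p hp v hv =>
  ⟨hA a ha.1 b hb.1 p hp v hv, hB a ha.2 b hb.2 p hp v hv⟩

lemma first_meet :
    ∀ {a b : W} (p : T.Walk a b), p.IsPath → ∀ {c : W} (r : T.Walk b c),
      ∃ (m : W) (w : T.Walk a m), w.IsPath ∧ m ∈ r.support ∧
        (∀ v ∈ w.support, v ∈ r.support → v = m) ∧ ∀ v ∈ w.support, v ∈ p.support := by
  intro a b p
  induction p with
  | nil =>
    intro _ c r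
    exact ⟨_, Walk.nil, IsPath.nil, r.start_mem_support, by simp, by simp⟩
  | @cons u v' b h p ih =>
    intro hp c r
    by_cases hur : u ∈ r.support
    · exact ⟨u, Walk.nil, IsPath.nil, hur, by simp, by simp⟩
    · obtain ⟨m, w, hw, hmr, huniq, hsub⟩ := ih hp.of_cons r
      have hu : u ∉ w.support := fun hmem =>
        ((Walk.cons_isPath_iff h p).1 hp).2 (hsub u hmem)
      refine ⟨m, Walk.cons h w, hw.cons hu, hmr, ?_, ?_⟩
      · intro v hv hvr
        rw [Walk.support_cons] at hv
        rcases List.mem_cons.1 hv with rfl | hv'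
        · exact absurd hvr hur
        · exact huniq v hv' hvr
      · intro v hv
        rw [Walk.support_cons] at hv ⊢
        rcases List.mem_cons.1 hv with rfl | hv'
        · exact List.mem_cons_self
        · exact List.mem_cons_of_mem _ (hsub v hv')

lemma median (hT : T.IsTree) {a b c : W} (p : T.Walk a b) (q : T.Walk a c) (r : T.Walk b c)
    (hp : p.IsPath) (hq : q.IsPath) (hr : r.IsPath) :
    ∃ m, m ∈ p.support ∧ m ∈ q.support ∧ m ∈ r.support := by
  classical
  obtain ⟨m, w, hw, hmr, huniq, hsub⟩ := first_meet p hp r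
  have hd : (r.dropUntil m hmr).IsPath := hr.dropUntil hmr
  have hW2p : (w.append (r.dropUntil m hmr)).IsPath := by
    rw [Walk.isPath_def, Walk.support_append]
    refine List.Nodup.append hw.support_nodup hd.support_nodup.tail ?_
    intro v hv hv'
    have hvr : v ∈ r.support :=
      Walk.support_dropUntil_subset r hmr (List.mem_of_mem_tail hv')
    have hvm : v = m := huniq v hv hvr
    subst hvm
    have := hd.support_nodup
    rw [Walk.support_eq_cons] at this
    exact (List.nodup_cons.1 this).1 hv'
  have hqe : q = w.append (r.dropUntil m hmr) :=
    (hT.existsUnique_path a c).unique hq hW2p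
  refine ⟨m, hsub m w.end_mem_support, ?_, hmr⟩
  rw [hqe]
  exact (Walk.mem_support_append_iff _ _).2 (Or.inl w.end_mem_support)

lemma conv_of_induce_connected (hT : T.IsTree) {A : Set W}
    (h : (T.induce A).Connected) : TConv T A := by
  classical
  intro a ha b hb p hp v hv
  obtain ⟨w⟩ := h.preconnected ⟨a, ha⟩ ⟨b, hb⟩
  have hmap : ∀ u ∈ (w.map (Embedding.induce A).toHom).support, u ∈ A := by
    intro u hu
    rw [Walk.support_map] at hu
    obtain ⟨⟨x, hx⟩, _, rfl⟩ := List.mem_map.1 hu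
    exact hx
  have hpe : p = (w.map (Embedding.induce A).toHom).bypass :=
    (hT.existsUnique_path a b).unique hp (Walk.bypass_isPath _)
  exact hmap v (Walk.support_bypass_subset _ (hpe ▸ hv))

lemma helly3 (hT : T.IsTree) {A B C : Set W}
    (hA : TConv T A) (hB : TConv T B) (hC : TConv T C)
    (hAB : (A ∩ B).Nonempty) (hAC : (A ∩ C).Nonempty) (hBC : (B ∩ C).Nonempty) :
    (A ∩ B ∩ C).Nonempty := by
  classical
  obtain ⟨a, haA, haB⟩ := hAB
  obtain ⟨b, hbA, hbC⟩ := hAC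
  obtain ⟨c, hcB, hcC⟩ := hBC
  obtain ⟨p0⟩ := hT.isConnected.preconnected a b
  obtain ⟨q0⟩ := hT.isConnected.preconnected a c
  obtain ⟨r0⟩ := hT.isConnected.preconnected b c
  obtain ⟨m, hmp, hmq, hmr⟩ := median hT p0.bypass q0.bypass r0.bypass
    (Walk.bypass_isPath _) (Walk.bypass_isPath _) (Walk.bypass_isPath _)
  exact ⟨m, ⟨hA a haA b hbA _ (Walk.bypass_isPath _) m hmp,
      hB a haB c hcB _ (Walk.bypass_isPath _) m hmq⟩,
    hC b hbC c hcC _ (Walk.bypass_isPath _) m hmr⟩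

lemma hellyAux (hT : T.IsTree) :
    ∀ (n : ℕ) (l : List (Set W)), l.length = n → l ≠ [] →
      (∀ A ∈ l, TConv T A) → (∀ A ∈ l, ∀ B ∈ l, (A ∩ B).Nonempty) →
      ∃ x, ∀ A ∈ l, x ∈ A := by
  intro n
  induction n with
  | zero =>
    intro l hn hne
    exact absurd (List.length_eq_zero_iff.1 hn) hne
  | succ n ih =>
    intro l hn hne hconv hpair
    match l with
    | [A] =>
      obtain ⟨x, hx⟩ := hpair A (by simp) A (by simp)
      exact ⟨x, by simpa using hx.1⟩
    | A :: B :: s =>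
      set t : List (Set W) := (B :: s).map (fun X => X ∩ A) with ht
      have hlen : t.length = n := by
        simp only [ht, List.length_map, List.length_cons] at hn ⊢
        omega
      have hconv' : ∀ X ∈ t, TConv T X := by
        intro X hX
        obtain ⟨Y, hY, rfl⟩ := List.mem_map.1 hX
        exact TConv.inter (hconv Y (List.mem_cons_of_mem _ hY)) (hconv A (by simp))
      have hpair' : ∀ X ∈ t, ∀ Y ∈ t, (X ∩ Y).Nonempty := by
        intro X hX Y hY
        obtain ⟨X', hX', rfl⟩ := List.mem_map.1 hX
        obtain ⟨Y', hY', rfl⟩ := List.mem_map.1 hY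
        have hmemX : X' ∈ A :: B :: s := List.mem_cons_of_mem _ hX'
        have hmemY : Y' ∈ A :: B :: s := List.mem_cons_of_mem _ hY'
        have hmemA : A ∈ A :: B :: s := by simp
        obtain ⟨z, hz⟩ := helly3 hT (hconv X' hmemX) (hconv Y' hmemY) (hconv A hmemA)
          (hpair X' hmemX Y' hmemY) (hpair X' hmemX A hmemA) (hpair Y' hmemY A hmemA)
        exact ⟨z, ⟨hz.1.1, hz.2⟩, hz.1.2, hz.2⟩
      obtain ⟨x, hx⟩ := ih t hlen (by simp [ht]) hconv' hpair'
      have hxA : x ∈ A := (hx (B ∩ A) (by simp [ht])).2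
      refine ⟨x, ?_⟩
      intro C hC
      rcases List.mem_cons.1 hC with rfl | hC'
      · exact hxA
      · exact (hx (C ∩ A) (List.mem_map_of_mem hC')).1

lemma hellyList (hT : T.IsTree) (l : List (Set W)) (hne : l ≠ [])
    (hconv : ∀ A ∈ l, TConv T A)
    (hpair : ∀ A ∈ l, ∀ B ∈ l, (A ∩ B).Nonempty) :
    ∃ x, ∀ A ∈ l, x ∈ A :=
  hellyAux hT l.length l rfl hne hconv hpair

end TreeHelly


section Aux

namespace Network

variable {V α : Type} [Fintype V] [DecidableEq V]

lemma consistentOn_mono {R : Network V α} {Y Z : Set V} (h : Y ⊆ Z) {f : V → α}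
    (hf : R.ConsistentOn Z f) : R.ConsistentOn Y f :=
  ⟨fun v hv => hf.1 v (h hv), fun c hc hs => hf.2 c hc (hs.trans h)⟩

lemma extend_consistent {R : Network V α} {Y : Finset V} {f : V → α}
    (hf : R.ConsistentOn ↑Y f) {x : V} (hx : x ∉ Y) {u : α} (hu : u ∈ R.dom x)
    (hrel : ∀ c ∈ R.cons, x ∈ c.scope → (↑(c.scope.erase x) : Set V) ⊆ ↑Y →
      Function.update f x u ∈ c.allowed) :
    R.ConsistentOn ↑(insert x Y) (Function.update f x u) := by
  constructor
  · intro v hv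
    rcases Finset.mem_insert.1 (by exact_mod_cast hv) with rfl | hvY
    · simpa using hu
    · have hne : v ≠ x := fun h => hx (h ▸ hvY)
      rw [Function.update_of_ne hne]
      exact hf.1 v hvY
  · intro c hc hs
    by_cases hxc : x ∈ c.scope
    · apply hrel c hc hxc
      intro v hv
      have hv' : v ∈ c.scope.erase x := by exact_mod_cast hv
      obtain ⟨hvx, hvs⟩ := Finset.mem_erase.1 hv'
      have : v ∈ insert x Y := by exact_mod_cast hs (by exact_mod_cast hvs)
      exact Finset.mem_coe.2 ((Finset.mem_insert.1 this).resolve_left hvx)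
    · have hsY : (c.scope : Set V) ⊆ ↑Y := by
        intro v hv
        have hvx : v ≠ x := fun h => hxc (by rw [← h]; exact_mod_cast hv)
        have : v ∈ insert x Y := by exact_mod_cast hs (by exact_mod_cast hv)
        exact Finset.mem_coe.2 ((Finset.mem_insert.1 this).resolve_left hvx)
      exact c.allowed_ext f _
        (fun v hv => (Function.update_of_ne (show v ≠ x from fun h => hxc (h ▸ hv)) u f).symm)
        (hf.2 c hc hsY)

end Network

end Aux

/-- **Tree Convexity (relational consistency version).**  A tree convex constraint
network that is strongly relationally path consistent (strongly relationally
`2`-consistent) is globally consistent. -/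
theorem Network.treeConvex_relCons_globallyConsistent
    {V α : Type} [Fintype V] [DecidableEq V] (R : Network V α)
    (htc : R.TreeConvexNet)
    (hrc : R.StronglyRelConsistent 2) :
    R.GloballyConsistent := by
  classical
  obtain ⟨T, hTtree, hTconv⟩ := htc
  intro j _ Y f _ hf x hx
  -- the relevant constraints
  set F : Finset (Constraint V α) :=
    R.cons_finite.toFinset.filter
      (fun c => x ∈ c.scope ∧ (↑(c.scope.erase x) : Set V) ⊆ ↑Y) with hF
  have hFmem : ∀ c, c ∈ F ↔ c ∈ R.cons ∧ x ∈ c.scope ∧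
      (↑(c.scope.erase x) : Set V) ⊆ ↑Y := by
    intro c
    simp [hF, Set.Finite.mem_toFinset]
  have hEraseY : ∀ c ∈ F, R.Inst (↑(c.scope.erase x) : Set V) f := by
    intro c hc v hv
    exact hf.1 v (((hFmem c).1 hc).2.2 hv)
  -- nonemptiness of extension sets via relational 1-consistency
  have h1 : ∀ c ∈ F, (R.extSet c x f).Nonempty := by
    intro c hc
    obtain ⟨hcc, hxc, hsub⟩ := (hFmem c).1 hc
    have hcons1 : R.ConsistentOn ((⋃ _ : Fin 1, ((c.scope : Set V))) \ {x}) f := by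
      refine R.consistentOn_mono ?_ hf
      intro v hv
      obtain ⟨hv1, hv2⟩ := hv
      have hvs : v ∈ c.scope := by
        obtain ⟨i, hvi⟩ := Set.mem_iUnion.1 hv1
        exact_mod_cast hvi
      have hvx : v ≠ x := by simpa using hv2
      exact hsub (by exact_mod_cast Finset.mem_erase.2 ⟨hvx, hvs⟩)
    obtain ⟨u, hu, hall⟩ := hrc 1 (by norm_num) (fun _ => c)
      (fun i j _ => Subsingleton.elim i j) (fun _ => hcc) x (fun _ => hxc) f hcons1
    exact ⟨u, hu, hall 0⟩
  -- pairwise intersection via relational 2-consistency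
  have h2 : ∀ c ∈ F, ∀ c' ∈ F, (R.extSet c x f ∩ R.extSet c' x f).Nonempty := by
    intro c hc c' hc'
    by_cases hne : c = c'
    · subst hne
      obtain ⟨u, hu⟩ := h1 c hc
      exact ⟨u, hu, hu⟩
    · obtain ⟨hcc, hxc, hsub⟩ := (hFmem c).1 hc
      obtain ⟨hcc', hxc', hsub'⟩ := (hFmem c').1 hc'
      have hinj : Function.Injective ![c, c'] := by
        intro i j hij
        fin_cases i <;> fin_cases j <;> simp_all
      have hcons2 : R.ConsistentOn ((⋃ i, ((![c, c'] i).scope : Set V)) \ {x}) f := by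
        refine R.consistentOn_mono ?_ hf
        intro v hv
        obtain ⟨hv1, hv2⟩ := hv
        obtain ⟨i, hvi⟩ := Set.mem_iUnion.1 hv1
        have hvx : v ≠ x := by simpa using hv2
        fin_cases i
        · have hvs : v ∈ c.scope := by simpa using hvi
          exact hsub (by exact_mod_cast Finset.mem_erase.2 ⟨hvx, hvs⟩)
        · have hvs : v ∈ c'.scope := by simpa using hvi
          exact hsub' (by exact_mod_cast Finset.mem_erase.2 ⟨hvx, hvs⟩)
      obtain ⟨u, hu, hall⟩ := hrc 2 le_rfl ![c, c'] hinj
        (fun i => by fin_cases i <;> assumption) x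
        (fun i => by fin_cases i <;> assumption) f hcons2
      exact ⟨u, ⟨hu, hall 0⟩, ⟨hu, hall 1⟩⟩
  -- the lifted extension sets in the tree's vertex type
  set Ehat : Constraint V α → Set {a : α // a ∈ ⋃ v, (R.dom v : Set α)} :=
    fun c => Subtype.val ⁻¹' R.extSet c x f with hEhat
  by_cases hFne : F.Nonempty
  · -- Helly
    set l : List (Set {a : α // a ∈ ⋃ v, (R.dom v : Set α)}) := F.toList.map Ehat with hl
    have hlne : l ≠ [] := by
      simp [hl, Finset.toList_eq_nil]
      exact Finset.nonempty_iff_ne_empty.1 hFne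
    have hmemE : ∀ u, u ∈ R.dom x → u ∈ ⋃ v, (R.dom v : Set α) := by
      intro u hu
      exact Set.mem_iUnion.2 ⟨x, hu⟩
    have hconv : ∀ A ∈ l, TreeHelly.TConv T A := by
      intro A hA
      obtain ⟨c, hcl, rfl⟩ := List.mem_map.1 hA
      have hc : c ∈ F := Finset.mem_toList.1 hcl
      obtain ⟨hcc, hxc, _⟩ := (hFmem c).1 hc
      exact TreeHelly.conv_of_induce_connected hTtree
        (hTconv c hcc x hxc f (hEraseY c hc) (h1 c hc))
    have hpair : ∀ A ∈ l, ∀ B ∈ l, (A ∩ B).Nonempty := by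
      intro A hA B hB
      obtain ⟨c, hcl, rfl⟩ := List.mem_map.1 hA
      obtain ⟨c', hcl', rfl⟩ := List.mem_map.1 hB
      obtain ⟨u, hu, hu'⟩ := h2 c (Finset.mem_toList.1 hcl) c' (Finset.mem_toList.1 hcl')
      exact ⟨⟨u, hmemE u hu.1⟩, hu, hu'⟩
    obtain ⟨⟨u, humem⟩, hall⟩ := TreeHelly.hellyList hTtree l hlne hconv hpair
    have huE : ∀ c ∈ F, u ∈ R.extSet c x f := by
      intro c hc
      exact hall (Ehat c) (List.mem_map_of_mem (Finset.mem_toList.2 hc))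
    obtain ⟨c₀, hc₀⟩ := hFne
    have hudom : u ∈ R.dom x := (huE c₀ hc₀).1
    refine ⟨u, hudom, R.extend_consistent hf hx hudom ?_⟩
    intro c hc hxc hsub
    exact (huE c ((hFmem c).2 ⟨hc, hxc, hsub⟩)).2
  · obtain ⟨u, hu⟩ := R.dom_nonempty x
    refine ⟨u, hu, R.extend_consistent hf hx hu ?_⟩
    intro c hc hxc hsub
    exact absurd ((hFmem c).2 ⟨hc, hxc, hsub⟩)
      (by simp [Finset.not_nonempty_iff_eq_empty.1 hFne])
end
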